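/- arXiv:1904.08882 — 5 statements merged into one kernel-verified Lean document; each statement's English description precedes it below -/
import Mathlib

section
/- Let b : ℕ → (0,∞) be completely multiplicative and τ ∈ ℕ. Suppose: (i) for every m ∈ ℕ and every real k > 1 there exists c ∈ ℝ such that b(n+m) ≤ k·b(n) + c for all n ∈ ℕ; and (ii) either b(n) = 1 for all n ∈ ℕ, or for every m ∈ ℕ there exists d > 0 such that max(b(nτ), b(nτ+m)) ≥ d for all n ∈ ℕ. Then exactly one of the following holds: (1) b(n) = 1 for all n ∈ ℕ; (2) there exist a prime p and H > 0 such that b(n) = (|n|_p)^H for all n ∈ ℕ; (3) there exists H > 0 such that b(n) = n^H for all n ∈ ℕ. -/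
open MeasureTheory ProbabilityTheory Filter

noncomputable section

/-- The `p`-adic norm of a natural number, as a real number (`0` for `n = 0`). -/
def padicNormNat (p n : ℕ) : ℝ := ((padicNorm p (n : ℚ) : ℚ) : ℝ)


section Helpers
variable (b : ℕ → ℝ)


lemma b_one (hbpos : ∀ n : ℕ, 1 ≤ n → 0 < b n)
    (hmul : ∀ m n : ℕ, 1 ≤ m → 1 ≤ n → b (m * n) = b m * b n) : b 1 = 1 := by
  have h := hmul 1 1 le_rfl le_rfl
  simp only [mul_one] at h
  nlinarith [hbpos 1 le_rfl]

lemma b_pow (hbpos : ∀ n : ℕ, 1 ≤ n → 0 < b n)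
    (hmul : ∀ m n : ℕ, 1 ≤ m → 1 ≤ n → b (m * n) = b m * b n)
    (a : ℕ) (ha : 1 ≤ a) (t : ℕ) : b (a ^ t) = b a ^ t := by
  induction t with
  | zero => simpa using b_one b hbpos hmul
  | succ t ih =>
      have h1 : 1 ≤ a ^ t := Nat.one_le_pow _ _ ha
      rw [pow_succ, hmul _ _ h1 ha, ih, pow_succ]

lemma lin_lt_pow (A B θ : ℝ) (hθ : 1 < θ) : ∃ t : ℕ, 1 ≤ t ∧ A * t + B < θ ^ t := by
  set μ := Real.sqrt θ with hμdef
  have hθ0 : (0:ℝ) ≤ θ := by linarith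
  have hμ : 1 < μ := by
    have : Real.sqrt 1 < Real.sqrt θ := Real.sqrt_lt_sqrt (by norm_num) hθ
    simpa using this
  set c := (μ - 1) ^ 2 with hcdef
  have hc : 0 < c := pow_pos (by linarith) 2
  obtain ⟨t, ht⟩ := exists_nat_ge (max ((A + |B|) / c + 1) 1)
  refine ⟨t, ?_, ?_⟩
  · have : (1:ℝ) ≤ t := le_trans (le_max_right _ _) ht
    exact_mod_cast this
  · have ht1 : (1:ℝ) ≤ t := le_trans (le_max_right _ _) ht
    have ht2 : (A + |B|) / c + 1 ≤ t := le_trans (le_max_left _ _) ht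
    have htc : A + |B| + c ≤ c * t := by
      rw [div_add' _ _ _ hc.ne'] at ht2
      calc A + |B| + c ≤ (A + |B| + c) := le_rfl
        _ ≤ c * t := by
          rw [div_le_iff₀ hc] at ht2
          linarith [ht2]
    -- θ ^ t = (μ ^ t)^2
    have hsq : θ ^ t = (μ ^ t) ^ 2 := by
      rw [← pow_mul, mul_comm, pow_mul, Real.sq_sqrt hθ0]
    have hber : 1 + (t:ℝ) * (μ - 1) ≤ μ ^ t := by
      have := one_add_mul_le_pow (a := μ - 1) (by linarith) t
      simpa using this
    have h0 : (0:ℝ) ≤ (t:ℝ) * (μ - 1) := mul_nonneg (by positivity) (by linarith)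
    have h2 : ((t:ℝ) * (μ - 1)) ^ 2 ≤ (μ ^ t) ^ 2 := by
      apply pow_le_pow_left₀ h0
      linarith
    have habs : B ≤ |B| := le_abs_self B
    have key : (t:ℝ)^2 * c = ((t:ℝ) * (μ - 1))^2 := by ring
    have hstep : (t:ℝ) * (A + |B| + c) ≤ (t:ℝ) * (c * t) :=
      mul_le_mul_of_nonneg_left htc (by positivity)
    nlinarith [mul_nonneg (sub_nonneg.2 ht1) (by positivity : (0:ℝ) ≤ |B| + c)]


lemma digit_bound (hbpos : ∀ n : ℕ, 1 ≤ n → 0 < b n)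
    (hmul : ∀ m n : ℕ, 1 ≤ m → 1 ≤ n → b (m * n) = b m * b n)
    (h1 : ∀ m : ℕ, 1 ≤ m → ∀ k : ℝ, 1 < k → ∃ c : ℝ, ∀ n : ℕ, 1 ≤ n →
      b (n + m) ≤ k * b n + c)
    (g : ℕ) (hg : 2 ≤ g) (k : ℝ) (hk : 1 < k) :
    ∃ C : ℝ, 0 ≤ C ∧ ∀ n r : ℕ, 1 ≤ n → r < g → b (g * n + r) ≤ k * b g * b n + C := by
  have hex : ∀ r : ℕ, ∃ c : ℝ, 0 ≤ c ∧ ∀ n, 1 ≤ n → b (n + r) ≤ k * b n + c := by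
    intro r
    rcases Nat.eq_zero_or_pos r with hr | hr
    · refine ⟨0, le_rfl, fun n hn => ?_⟩
      subst hr
      have := hbpos n hn
      simp only [add_zero]
      nlinarith
    · obtain ⟨c, hc⟩ := h1 r hr k hk
      refine ⟨max c 0, le_max_right _ _, fun n hn => ?_⟩
      exact (hc n hn).trans (by gcongr; exact le_max_left _ _)
  choose c hc0 hcb using hex
  refine ⟨∑ r ∈ Finset.range g, c r, Finset.sum_nonneg (fun r _ => hc0 r), fun n r hn hr => ?_⟩
  have hgn : 1 ≤ g * n := le_trans hn (Nat.le_mul_of_pos_left n (by omega))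
  have h := hcb r (g * n) hgn
  rw [hmul g n (by omega) hn] at h
  have hsingle : c r ≤ ∑ r ∈ Finset.range g, c r :=
    Finset.single_le_sum (fun i _ => hc0 i) (Finset.mem_range.2 hr)
  calc b (g * n + r) ≤ k * (b g * b n) + c r := h
    _ ≤ k * b g * b n + ∑ r ∈ Finset.range g, c r := by rw [mul_assoc]; linarith

lemma iter_bound (hbpos : ∀ n : ℕ, 1 ≤ n → 0 < b n)
    (g : ℕ) (hg : 2 ≤ g) (k : ℝ) (hk : 1 < k) (C : ℝ) (hC : 0 ≤ C)
    (hdig : ∀ n r : ℕ, 1 ≤ n → r < g → b (g * n + r) ≤ k * b g * b n + C) :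
    ∃ A : ℝ, 0 < A ∧ ∀ N : ℕ, 1 ≤ N →
      b N ≤ A * ((Nat.log g N : ℝ) + 1) * (max (k * b g) 1) ^ (Nat.log g N) := by
  set lam := max (k * b g) 1 with hlam
  have hlam1 : (1:ℝ) ≤ lam := le_max_right _ _
  refine ⟨(∑ j ∈ Finset.Icc 1 g, b j) + C, ?_, ?_⟩
  · have hpos : 0 < ∑ j ∈ Finset.Icc 1 g, b j := by
      apply Finset.sum_pos (fun i hi => hbpos i (Finset.mem_Icc.1 hi).1)
      exact ⟨1, Finset.mem_Icc.2 ⟨le_rfl, by omega⟩⟩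
    linarith
  set A := (∑ j ∈ Finset.Icc 1 g, b j) + C with hA
  have hAb : ∀ j : ℕ, 1 ≤ j → j ≤ g → b j ≤ A := by
    intro j hj1 hjg
    have : b j ≤ ∑ i ∈ Finset.Icc 1 g, b i :=
      Finset.single_le_sum (fun i hi => (hbpos i (Finset.mem_Icc.1 hi).1).le)
        (Finset.mem_Icc.2 ⟨hj1, hjg⟩)
    linarith
  have hCA : C ≤ A := by
    have hpos : 0 < ∑ j ∈ Finset.Icc 1 g, b j := by
      apply Finset.sum_pos (fun i hi => hbpos i (Finset.mem_Icc.1 hi).1)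
      exact ⟨1, Finset.mem_Icc.2 ⟨le_rfl, by omega⟩⟩
    linarith
  have hA0 : 0 < A := lt_of_lt_of_le (hbpos 1 le_rfl) (hAb 1 le_rfl (by omega))
  intro N
  induction N using Nat.strong_induction_on with
  | _ N ih =>
    intro hN
    by_cases hNg : N < g
    · have hlog : Nat.log g N = 0 := Nat.log_eq_zero_iff.2 (Or.inl hNg)
      rw [hlog]
      simpa using (hAb N hN (by omega)).trans (by nlinarith)
    · push_neg at hNg
      set n := N / g with hn
      have hg0 : 0 < g := by omega
      have hn1 : 1 ≤ n := (Nat.one_le_div_iff hg0).2 hNg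
      have hr : N % g < g := Nat.mod_lt _ hg0
      have hNeq : g * n + N % g = N := Nat.div_add_mod N g
      have hlogN : Nat.log g N = Nat.log g n + 1 := by
        have h1' : Nat.log g n = Nat.log g N - 1 := Nat.log_div_base g N
        have h2' : 0 < Nat.log g N := Nat.log_pos (by omega) hNg
        omega
      have hnN : n < N := Nat.div_lt_self (by omega) (by omega)
      have ihn := ih n hnN hn1
      have hb1 : b N ≤ k * b g * b n + C := by
        rw [← hNeq]; exact hdig n (N % g) hn1 hr
      have hkb : k * b g ≤ lam := le_max_left _ _
      have hbn0 : 0 < b n := hbpos n hn1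
      have hlampow : (1:ℝ) ≤ lam ^ Nat.log g N := one_le_pow₀ hlam1
      rw [hlogN]
      push_cast
      rw [hlogN] at hlampow
      have hstep : b N ≤ lam * b n + C := by nlinarith
      have hlin : lam * b n ≤ lam * (A * ((Nat.log g n : ℝ) + 1) * lam ^ Nat.log g n) := by
        apply mul_le_mul_of_nonneg_left ihn (by linarith)
      have hCle : C ≤ A * lam ^ (Nat.log g n + 1) := by
        have h1' : (1:ℝ) ≤ lam ^ (Nat.log g n + 1) := one_le_pow₀ hlam1
        nlinarith
      have heq : lam * (A * ((Nat.log g n : ℝ) + 1) * lam ^ Nat.log g n)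
          = A * ((Nat.log g n : ℝ) + 1) * lam ^ (Nat.log g n + 1) := by
        rw [pow_succ]; ring
      linarith [hstep, hlin, hCle, heq]

lemma bg_ge_one (hbpos : ∀ n : ℕ, 1 ≤ n → 0 < b n)
    (hmul : ∀ m n : ℕ, 1 ≤ m → 1 ≤ n → b (m * n) = b m * b n)
    (h1 : ∀ m : ℕ, 1 ≤ m → ∀ k : ℝ, 1 < k → ∃ c : ℝ, ∀ n : ℕ, 1 ≤ n →
      b (n + m) ≤ k * b n + c)
    (n0 : ℕ) (hn0 : 2 ≤ n0) (hbn0 : 1 < b n0) :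
    ∀ g : ℕ, 2 ≤ g → 1 ≤ b g := by
  intro g hg
  by_contra hlt
  push_neg at hlt
  have hbg0 : 0 < b g := hbpos g (by omega)
  set k := (1 + (b g)⁻¹) / 2 with hkdef
  have hinv : 1 < (b g)⁻¹ := (one_lt_inv₀ hbg0).2 hlt
  have hk : 1 < k := by rw [hkdef]; linarith
  have hkb : k * b g < 1 := by
    have hkk : k * b g = (b g + 1) / 2 := by
      rw [hkdef]; field_simp
    rw [hkk]; linarith
  obtain ⟨C, hC0, hdig⟩ := digit_bound b hbpos hmul h1 g hg k hk
  obtain ⟨A, hA0, hiter⟩ := iter_bound b hbpos g hg k hk C hC0 hdig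
  have hlam : max (k * b g) 1 = 1 := max_eq_right (le_of_lt hkb)
  set L0 := Nat.log g n0 with hL0
  have hbound : ∀ t : ℕ, 1 ≤ t → b n0 ^ t ≤ (A * (L0 + 1)) * t + A := by
    intro t ht
    have hpow1 : 1 ≤ n0 ^ t := Nat.one_le_pow _ _ (by omega)
    have h := hiter (n0 ^ t) hpow1
    rw [hlam, one_pow, mul_one] at h
    rw [← b_pow b hbpos hmul n0 (by omega) t]
    have hlog : Nat.log g (n0 ^ t) < t * (L0 + 1) + 1 := by
      apply Nat.log_lt_of_lt_pow (by positivity)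
      calc n0 ^ t < (g ^ (L0 + 1)) ^ t :=
            Nat.pow_lt_pow_left (Nat.lt_pow_succ_log_self (by omega) n0) (by omega)
        _ = g ^ ((L0 + 1) * t) := by rw [← pow_mul]
        _ ≤ g ^ (t * (L0 + 1) + 1) := Nat.pow_le_pow_right (by omega) (by nlinarith)
    have hlog' : (Nat.log g (n0 ^ t) : ℝ) ≤ t * (L0 + 1) := by
      have : Nat.log g (n0 ^ t) ≤ t * (L0 + 1) := by omega
      exact_mod_cast this
    calc b (n0 ^ t) ≤ A * ((Nat.log g (n0 ^ t) : ℝ) + 1) := h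
      _ ≤ A * ((t : ℝ) * (L0 + 1) + 1) := by nlinarith
      _ = (A * (L0 + 1)) * t + A := by ring
  obtain ⟨t, ht1, htlt⟩ := lin_lt_pow (A * (L0 + 1)) A (b n0) hbn0
  exact absurd (hbound t ht1) (not_le.2 htlt)

lemma pair_ineq (hbpos : ∀ n : ℕ, 1 ≤ n → 0 < b n)
    (hmul : ∀ m n : ℕ, 1 ≤ m → 1 ≤ n → b (m * n) = b m * b n)
    (h1 : ∀ m : ℕ, 1 ≤ m → ∀ k : ℝ, 1 < k → ∃ c : ℝ, ∀ n : ℕ, 1 ≤ n →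
      b (n + m) ≤ k * b n + c)
    (hge1 : ∀ g : ℕ, 2 ≤ g → 1 ≤ b g)
    (g h : ℕ) (hg : 2 ≤ g) (hh : 2 ≤ h) :
    b h ≤ (b g) ^ (Real.log h / Real.log g) := by
  set M := Real.log h / Real.log g with hM
  have hlogg : 0 < Real.log g := Real.log_pos (by exact_mod_cast hg)
  have hlogh : 0 < Real.log h := Real.log_pos (by exact_mod_cast hh)
  have hM0 : 0 < M := div_pos hlogh hlogg
  have hbg1 : 1 ≤ b g := hge1 g hg
  have hbg0 : 0 < b g := by linarith
  have hbh0 : 0 < b h := hbpos h (by omega)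
  have key : ∀ k : ℝ, 1 < k → b h ≤ (k * b g) ^ M := by
    intro k hk
    by_contra hcon
    push_neg at hcon
    have hkbg : 1 < k * b g := by nlinarith
    have hkbg0 : 0 < k * b g := by linarith
    obtain ⟨C, hC0, hdig⟩ := digit_bound b hbpos hmul h1 g hg k hk
    obtain ⟨A, hA0, hiter⟩ := iter_bound b hbpos g hg k hk C hC0 hdig
    have hlam : max (k * b g) 1 = k * b g := max_eq_left (le_of_lt hkbg)
    have hX0 : 0 < (k * b g) ^ M := Real.rpow_pos_of_pos hkbg0 M
    set ρ := b h / (k * b g) ^ M with hρdef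
    have hρ : 1 < ρ := (one_lt_div hX0).2 hcon
    have hbound : ∀ t : ℕ, 1 ≤ t → ρ ^ t ≤ (A * M) * t + A := by
      intro t ht
      have hpow1 : 1 ≤ h ^ t := Nat.one_le_pow _ _ (by omega)
      have hb := hiter (h ^ t) hpow1
      rw [hlam] at hb
      set L := Nat.log g (h ^ t) with hL
      have hlogle : (L : ℝ) ≤ t * M := by
        have hle : (g : ℕ) ^ L ≤ h ^ t := Nat.pow_log_le_self g (by positivity)
        have hle' : ((g : ℝ)) ^ L ≤ ((h : ℝ)) ^ t := by exact_mod_cast hle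
        have hlog2 : Real.log ((g : ℝ) ^ L) ≤ Real.log ((h : ℝ) ^ t) :=
          Real.log_le_log (by positivity) hle'
        rw [Real.log_pow, Real.log_pow] at hlog2
        rw [hM, show (t:ℝ) * (Real.log h / Real.log g) = (t * Real.log h) / Real.log g by ring,
          le_div_iff₀ hlogg]
        exact hlog2
      have hXpos : (0:ℝ) < ((k * b g) ^ M) ^ t := pow_pos hX0 t
      have hpowle : (k * b g) ^ L ≤ ((k * b g) ^ M) ^ t := by
        calc (k * b g) ^ L = (k * b g) ^ ((L : ℝ)) := (Real.rpow_natCast _ L).symm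
          _ ≤ (k * b g) ^ ((t : ℝ) * M) :=
              Real.rpow_le_rpow_of_exponent_le (le_of_lt hkbg) hlogle
          _ = ((k * b g) ^ M) ^ t := by
              rw [← Real.rpow_natCast ((k * b g) ^ M) t, ← Real.rpow_mul (le_of_lt hkbg0)]
              congr 1
              ring
      have hchain : b (h ^ t) ≤ A * ((t : ℝ) * M + 1) * ((k * b g) ^ M) ^ t := by
        calc b (h ^ t) ≤ A * ((L : ℝ) + 1) * (k * b g) ^ L := hb
          _ ≤ A * ((t : ℝ) * M + 1) * ((k * b g) ^ M) ^ t := by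
              gcongr <;> first
                | exact le_of_lt hA0
                | positivity
                | linarith
      have hfin : ρ ^ t ≤ A * ((t : ℝ) * M + 1) := by
        rw [hρdef, div_pow, div_le_iff₀ hXpos]
        rw [← b_pow b hbpos hmul h (by omega) t]
        exact hchain
      calc ρ ^ t ≤ A * ((t : ℝ) * M + 1) := hfin
        _ = (A * M) * t + A := by ring
    obtain ⟨t, ht1, htlt⟩ := lin_lt_pow (A * M) A ρ hρ
    exact absurd (hbound t ht1) (not_le.2 htlt)
  by_contra hcon
  push_neg at hcon
  have hbgM0 : 0 < b g ^ M := Real.rpow_pos_of_pos hbg0 M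
  set r := b h / b g ^ M with hrdef
  have hr : 1 < r := (one_lt_div hbgM0).2 hcon
  set k := r ^ (2 * M)⁻¹ with hkdef
  have hr0 : (0:ℝ) < r := by linarith
  have hk : 1 < k := by
    rw [hkdef]
    rw [Real.one_lt_rpow_iff_of_pos hr0]
    left
    exact ⟨hr, by positivity⟩
  have h2 := key k hk
  rw [Real.mul_rpow (by linarith) (le_of_lt hbg0)] at h2
  have hkM : k ^ M = r ^ (2:ℝ)⁻¹ := by
    rw [hkdef, ← Real.rpow_mul (le_of_lt hr0)]
    congr 1
    field_simp
  have hlt2 : r ^ (2:ℝ)⁻¹ < r := by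
    calc r ^ (2:ℝ)⁻¹ < r ^ (1:ℝ) := Real.rpow_lt_rpow_of_exponent_lt hr (by norm_num)
      _ = r := Real.rpow_one r
  have hbh : b h = r * b g ^ M := by
    rw [hrdef]; field_simp
  have : b h < b h := by
    calc b h ≤ k ^ M * b g ^ M := h2
      _ = r ^ (2:ℝ)⁻¹ * b g ^ M := by rw [hkM]
      _ < r * b g ^ M := by nlinarith
      _ = b h := hbh.symm
  exact lt_irrefl _ this

lemma caseII (hbpos : ∀ n : ℕ, 1 ≤ n → 0 < b n)
    (hmul : ∀ m n : ℕ, 1 ≤ m → 1 ≤ n → b (m * n) = b m * b n)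
    (h1 : ∀ m : ℕ, 1 ≤ m → ∀ k : ℝ, 1 < k → ∃ c : ℝ, ∀ n : ℕ, 1 ≤ n →
      b (n + m) ≤ k * b n + c)
    (n0 : ℕ) (hn01 : 1 ≤ n0) (hbn0 : 1 < b n0) :
    ∃ H : ℝ, 0 < H ∧ ∀ n : ℕ, 1 ≤ n → b n = (n : ℝ) ^ H := by
  have hb1 : b 1 = 1 := b_one b hbpos hmul
  have hn0 : 2 ≤ n0 := by
    have : n0 ≠ 1 := by intro h; rw [h, hb1] at hbn0; linarith
    omega
  have hge1 := bg_ge_one b hbpos hmul h1 n0 hn0 hbn0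
  have hlog2 : 0 < Real.log ((2:ℕ):ℝ) := Real.log_pos (by norm_num)
  have hb20 : 0 < b 2 := hbpos 2 (by omega)
  set H := Real.log (b 2) / Real.log ((2:ℕ):ℝ) with hHdef
  have hmain : ∀ h : ℕ, 2 ≤ h →
      Real.log (b h) * Real.log ((2:ℕ):ℝ) = Real.log (h:ℝ) * Real.log (b 2) := by
    intro h hh
    have hlogh : 0 < Real.log (h:ℝ) := Real.log_pos (by exact_mod_cast hh)
    have hbh0 : 0 < b h := hbpos h (by omega)
    have i1 := pair_ineq b hbpos hmul h1 hge1 2 h (by norm_num) hh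
    have i2 := pair_ineq b hbpos hmul h1 hge1 h 2 hh (by norm_num)
    have l1 : Real.log (b h) ≤ Real.log (h:ℝ) / Real.log ((2:ℕ):ℝ) * Real.log (b 2) := by
      have := Real.log_le_log hbh0 i1
      rwa [Real.log_rpow hb20] at this
    have l2 : Real.log (b 2) ≤ Real.log ((2:ℕ):ℝ) / Real.log (h:ℝ) * Real.log (b h) := by
      have := Real.log_le_log hb20 i2
      rwa [Real.log_rpow hbh0] at this
    have l1' : Real.log (b h) * Real.log ((2:ℕ):ℝ) ≤ Real.log (h:ℝ) * Real.log (b 2) := by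
      have := mul_le_mul_of_nonneg_right l1 (le_of_lt hlog2)
      calc Real.log (b h) * Real.log ((2:ℕ):ℝ)
          ≤ Real.log (h:ℝ) / Real.log ((2:ℕ):ℝ) * Real.log (b 2) * Real.log ((2:ℕ):ℝ) := this
        _ = Real.log (h:ℝ) * Real.log (b 2) := by field_simp
    have l2' : Real.log (h:ℝ) * Real.log (b 2) ≤ Real.log (b h) * Real.log ((2:ℕ):ℝ) := by
      have := mul_le_mul_of_nonneg_right l2 (le_of_lt hlogh)
      calc Real.log (h:ℝ) * Real.log (b 2) = Real.log (b 2) * Real.log (h:ℝ) := by ring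
        _ ≤ Real.log ((2:ℕ):ℝ) / Real.log (h:ℝ) * Real.log (b h) * Real.log (h:ℝ) := this
        _ = Real.log (b h) * Real.log ((2:ℕ):ℝ) := by field_simp
    linarith
  have hH0 : 0 < H := by
    have h0 := hmain n0 hn0
    have hlogn0 : 0 < Real.log (n0:ℝ) := Real.log_pos (by exact_mod_cast hn0)
    have hlogbn0 : 0 < Real.log (b n0) := Real.log_pos hbn0
    have hb2 : 0 < Real.log (b 2) := by nlinarith
    exact div_pos hb2 hlog2
  refine ⟨H, hH0, fun n hn => ?_⟩
  rcases Nat.lt_or_ge n 2 with hc | hc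
  · interval_cases n
    rw [hb1]
    norm_num
  · have hbn0' : 0 < b n := hbpos n (by omega)
    have hnpos : (0:ℝ) < (n:ℝ) := by positivity
    have heq : Real.log (b n) = Real.log (n:ℝ) * H := by
      rw [hHdef]
      have := hmain n hc
      simp only [Nat.cast_ofNat] at this
      field_simp
      simp only [Nat.cast_ofNat] at this ⊢; linarith
    rw [Real.rpow_def_of_pos hnpos, ← heq, Real.exp_log hbn0']



lemma exists_bad_prime (hbpos : ∀ n : ℕ, 1 ≤ n → 0 < b n)
    (hmul : ∀ m n : ℕ, 1 ≤ m → 1 ≤ n → b (m * n) = b m * b n)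
    (hle : ∀ n : ℕ, 1 ≤ n → b n ≤ 1) :
    ∀ n : ℕ, 1 ≤ n → b n < 1 → ∃ q : ℕ, q.Prime ∧ q ∣ n ∧ b q < 1 := by
  intro n
  induction n using Nat.strong_induction_on with
  | _ n ih =>
    intro hn hbn
    have hn1 : n ≠ 1 := by
      intro h; rw [h, b_one b hbpos hmul] at hbn; linarith
    have hpp : n.minFac.Prime := Nat.minFac_prime hn1
    have hpd : n.minFac ∣ n := Nat.minFac_dvd n
    by_cases hbp : b n.minFac < 1
    · exact ⟨n.minFac, hpp, hpd, hbp⟩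
    · push_neg at hbp
      obtain ⟨m, hm⟩ := hpd
      have hm1 : 1 ≤ m := by
        rcases Nat.eq_zero_or_pos m with h | h
        · rw [h, mul_zero] at hm; omega
        · exact h
      have hbpm : b n = b n.minFac * b m := by
        have := hmul n.minFac m hpp.one_lt.le hm1
        rw [← hm] at this
        exact this
      have hbp1 : b n.minFac = 1 := le_antisymm (hle _ hpp.one_lt.le) hbp
      have hbm : b m < 1 := by rw [hbpm, hbp1, one_mul] at hbn; exact hbn
      have hmlt : m < n := by
        have h2 : 2 ≤ n.minFac := hpp.two_le
        have h3 : 2 * m ≤ n := by rw [hm]; exact Nat.mul_le_mul_right m h2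
        omega
      obtain ⟨q, h1q, h2q, h3q⟩ := ih m hmlt hm1 hbm
      exact ⟨q, h1q, h2q.trans (Dvd.intro_left _ hm.symm), h3q⟩

lemma crt_contra (hbpos : ∀ n : ℕ, 1 ≤ n → 0 < b n)
    (hmul : ∀ m n : ℕ, 1 ≤ m → 1 ≤ n → b (m * n) = b m * b n)
    (hle : ∀ n : ℕ, 1 ≤ n → b n ≤ 1)
    (τ : ℕ) (hτ : 1 ≤ τ)
    (hstar : ∀ m : ℕ, 1 ≤ m → ∃ d : ℝ, 0 < d ∧ ∀ n : ℕ, 1 ≤ n →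
      d ≤ max (b (n * τ)) (b (n * τ + m)))
    (p q : ℕ) (hp : p.Prime) (hq : q.Prime) (hpq : p ≠ q)
    (hbp : b p < 1) (hbq : b q < 1) : False := by
  have hbp0 : 0 < b p := hbpos p hp.one_lt.le
  have hbq0 : 0 < b q := hbpos q hq.one_lt.le
  set v := τ.factorization q with hv
  set m := q ^ v with hmdef
  have hm1 : 1 ≤ m := Nat.one_le_pow _ _ hq.pos
  obtain ⟨d, hd0, hd⟩ := hstar m hm1
  obtain ⟨N1, hN1⟩ := exists_pow_lt_of_lt_one hd0 hbp
  obtain ⟨N2, hN2⟩ := exists_pow_lt_of_lt_one hd0 hbq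
  set N := max (max N1 N2) 1 with hN
  have hN1' : b p ^ N < d :=
    lt_of_le_of_lt (pow_le_pow_of_le_one hbp0.le hbp.le (by omega)) hN1
  have hN2' : b q ^ N < d :=
    lt_of_le_of_lt (pow_le_pow_of_le_one hbq0.le hbq.le (by omega)) hN2
  set τ₀ := τ / q ^ τ.factorization q with hτ₀
  have hτfac : τ = q ^ v * τ₀ := (Nat.ordProj_mul_ordCompl_eq_self τ q).symm
  have hqτ₀ : ¬ q ∣ τ₀ := Nat.not_dvd_ordCompl hq (by omega)
  have hτ₀1 : 1 ≤ τ₀ := Nat.ordCompl_pos q (show τ ≠ 0 by omega)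
  have hcop : Nat.Coprime (p ^ N * τ₀) (q ^ N) := by
    apply Nat.Coprime.mul
    · exact Nat.Coprime.pow _ _ ((Nat.coprime_primes hp hq).2 hpq)
    · exact (((hq.coprime_iff_not_dvd).2 hqτ₀).symm).pow_right N
  haveI : NeZero (q ^ N) := ⟨pow_ne_zero _ hq.pos.ne'⟩
  set a : ZMod (q ^ N) := -(((p ^ N * τ₀ : ℕ) : ZMod (q ^ N)))⁻¹ with ha
  set n' := a.val + q ^ N with hn'
  have hn'1 : 1 ≤ n' := by
    have := Nat.one_le_pow N q hq.pos
    omega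
  set n := p ^ N * n' with hndef
  have hn1 : 1 ≤ n := by
    have := Nat.one_le_pow N p hp.pos
    exact Nat.one_le_iff_ne_zero.2 (by positivity)
  have hu : IsUnit ((p ^ N * τ₀ : ℕ) : ZMod (q ^ N)) := by
    rw [ZMod.isUnit_iff_coprime]; exact hcop
  have hdvd2 : q ^ N ∣ p ^ N * n' * τ₀ + 1 := by
    rw [← ZMod.natCast_eq_zero_iff]
    have expand : ((p ^ N * n' * τ₀ + 1 : ℕ) : ZMod (q ^ N))
        = ((p ^ N * τ₀ : ℕ) : ZMod (q ^ N)) * ((n' : ℕ) : ZMod (q ^ N)) + 1 := by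
      push_cast; ring
    rw [expand]
    have hqN0 : ((q ^ N : ℕ) : ZMod (q ^ N)) = 0 := ZMod.natCast_self _
    have hval : ((n' : ℕ) : ZMod (q ^ N)) = a := by
      rw [hn', Nat.cast_add, hqN0, add_zero]
      exact ZMod.natCast_zmod_val a
    rw [hval, ha, mul_neg, ZMod.mul_inv_of_unit _ hu]
    ring
  have hbound : ∀ a x : ℕ, 1 ≤ a → a ∣ x → 1 ≤ x → b x ≤ b a := by
    intro a x ha hax hx
    obtain ⟨y, hy⟩ := hax
    have hy1 : 1 ≤ y := by
      rcases Nat.eq_zero_or_pos y with h | h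
      · rw [h, mul_zero] at hy; omega
      · exact h
    rw [hy, hmul a y ha hy1]
    nlinarith [hbpos a ha, hbpos y hy1, hle y hy1]
  have hnτ1 : 1 ≤ n * τ := by
    have := Nat.mul_le_mul hn1 hτ
    simpa using this
  have hdvd1 : p ^ N ∣ n * τ := Dvd.dvd.mul_right ⟨n', rfl⟩ τ
  have hb1' : b (n * τ) ≤ b p ^ N := by
    have := hbound (p ^ N) (n * τ) (Nat.one_le_pow _ _ hp.pos) hdvd1 hnτ1
    rwa [b_pow b hbpos hmul p hp.one_lt.le N] at this
  have hkey : n * τ + m = q ^ v * (p ^ N * n' * τ₀ + 1) := by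
    rw [hndef, hmdef, hτfac]
    ring
  have hdvd2' : q ^ N ∣ n * τ + m := by
    rw [hkey]
    exact Dvd.dvd.mul_left hdvd2 _
  have hb2' : b (n * τ + m) ≤ b q ^ N := by
    have := hbound (q ^ N) _ (Nat.one_le_pow _ _ hq.pos) hdvd2' (by omega)
    rwa [b_pow b hbpos hmul q hq.one_lt.le N] at this
  have hmax : max (b (n * τ)) (b (n * τ + m)) < d :=
    max_lt (lt_of_le_of_lt hb1' hN1') (lt_of_le_of_lt hb2' hN2')
  linarith [hd n hn1]

lemma b_coprime_one (hbpos : ∀ n : ℕ, 1 ≤ n → 0 < b n)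
    (hmul : ∀ m n : ℕ, 1 ≤ m → 1 ≤ n → b (m * n) = b m * b n)
    (q : ℕ) (hq : q.Prime)
    (hother : ∀ p : ℕ, p.Prime → p ≠ q → b p = 1) :
    ∀ n : ℕ, 1 ≤ n → ¬ q ∣ n → b n = 1 := by
  intro n
  induction n using Nat.strong_induction_on with
  | _ n ih =>
    intro hn hqn
    by_cases hn1 : n = 1
    · rw [hn1]; exact b_one b hbpos hmul
    · have hpp : n.minFac.Prime := Nat.minFac_prime hn1
      have hpd : n.minFac ∣ n := Nat.minFac_dvd n
      have hpneq : n.minFac ≠ q := by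
        intro h; exact hqn (h ▸ hpd)
      obtain ⟨m, hm⟩ := hpd
      have hm1 : 1 ≤ m := by
        rcases Nat.eq_zero_or_pos m with h | h
        · rw [h, mul_zero] at hm; omega
        · exact h
      have hbn : b n = b n.minFac * b m := by
        have := hmul n.minFac m hpp.one_lt.le hm1
        rwa [← hm] at this
      have hmlt : m < n := by
        have h2 : 2 ≤ n.minFac := hpp.two_le
        have h3 : 2 * m ≤ n := by rw [hm]; exact Nat.mul_le_mul_right m h2
        omega
      have hqm : ¬ q ∣ m := fun h => hqn (h.trans (Dvd.intro_left _ hm.symm))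
      rw [hbn, hother _ hpp hpneq, one_mul]
      exact ih m hmlt hm1 hqm

lemma caseI (hbpos : ∀ n : ℕ, 1 ≤ n → 0 < b n)
    (hmul : ∀ m n : ℕ, 1 ≤ m → 1 ≤ n → b (m * n) = b m * b n)
    (τ : ℕ) (hτ : 1 ≤ τ)
    (hstar : ∀ m : ℕ, 1 ≤ m → ∃ d : ℝ, 0 < d ∧ ∀ n : ℕ, 1 ≤ n →
      d ≤ max (b (n * τ)) (b (n * τ + m)))
    (hle : ∀ n : ℕ, 1 ≤ n → b n ≤ 1)
    (n1 : ℕ) (hn11 : 1 ≤ n1) (hbn1 : b n1 ≠ 1) :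
    ∃ p : ℕ, p.Prime ∧ ∃ H : ℝ, 0 < H ∧ ∀ n : ℕ, 1 ≤ n →
      b n = (padicNormNat p n) ^ H := by
  have hlt : b n1 < 1 := lt_of_le_of_ne (hle n1 hn11) hbn1
  obtain ⟨q, hq, _, hbq⟩ := exists_bad_prime b hbpos hmul hle n1 hn11 hlt
  have hbq0 : 0 < b q := hbpos q hq.one_lt.le
  have hother : ∀ p : ℕ, p.Prime → p ≠ q → b p = 1 := by
    intro p hp hne
    by_contra hne1
    have hplt : b p < 1 := lt_of_le_of_ne (hle p hp.one_lt.le) hne1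
    exact crt_contra b hbpos hmul hle τ hτ hstar p q hp hq hne hplt hbq
  have hcop := b_coprime_one b hbpos hmul q hq hother
  set H := -(Real.log (b q) / Real.log q) with hH
  have hq1R : (1:ℝ) < (q:ℝ) := by exact_mod_cast hq.one_lt
  have hqR0 : (0:ℝ) < (q:ℝ) := by linarith
  have hlogq : 0 < Real.log q := Real.log_pos hq1R
  have hlogbq : Real.log (b q) < 0 := Real.log_neg hbq0 hbq
  have hH0 : 0 < H := by
    rw [hH]
    have := div_neg_of_neg_of_pos hlogbq hlogq
    linarith
  have hbqH : b q = (q:ℝ) ^ (-H) := by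
    rw [Real.rpow_def_of_pos hqR0, hH]
    have heq : Real.log (q:ℝ) * - -(Real.log (b q) / Real.log (q:ℝ)) = Real.log (b q) := by
      field_simp
    rw [heq, Real.exp_log hbq0]
  refine ⟨q, hq, H, hH0, fun n hn => ?_⟩
  set v := n.factorization q with hv
  set u := n / q ^ v with hu
  have hfac : n = q ^ v * u := (Nat.ordProj_mul_ordCompl_eq_self n q).symm
  have hqu : ¬ q ∣ u := Nat.not_dvd_ordCompl hq (by omega)
  have hu1 : 1 ≤ u := Nat.ordCompl_pos q (by omega : n ≠ 0)
  have hbn : b n = b q ^ v := by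
    have h1 : b n = b (q ^ v) * b u := by
      have := hmul (q ^ v) u (Nat.one_le_pow _ _ hq.pos) hu1
      rwa [← hfac] at this
    rw [h1, hcop u hu1 hqu, mul_one, b_pow b hbpos hmul q hq.one_lt.le]
  have hpn : padicNormNat q n = (q:ℝ) ^ (-(v:ℝ)) := by
    rw [padicNormNat]
    have hn0 : ((n:ℚ)) ≠ 0 := by
      exact_mod_cast (by omega : n ≠ 0)
    rw [padicNorm.eq_zpow_of_nonzero hn0]
    rw [@padicValRat.of_nat q n]
    have hvv : padicValNat q n = v := (Nat.factorization_def n hq).symm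
    rw [hvv]
    rw [show -(v:ℝ) = ((-(v:ℤ) : ℤ) : ℝ) by push_cast; ring, Real.rpow_intCast]
    push_cast
    ring
  rw [hbn, hpn, hbqH]
  rw [← Real.rpow_natCast ((q:ℝ) ^ (-H)) v, ← Real.rpow_mul hqR0.le, ← Real.rpow_mul (by positivity)]
  congr 1
  ring

end Helpers



lemma padic_self_lt_one (p : ℕ) (hp : p.Prime) (H : ℝ) (hH : 0 < H) :
    padicNormNat p p ^ H < 1 := by
  have hp1 : (1:ℝ) < (p:ℝ) := by exact_mod_cast hp.one_lt
  have heq : padicNormNat p p = ((p:ℝ))⁻¹ := by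
    rw [padicNormNat, padicNorm.padicNorm_p hp.one_lt]
    push_cast
    ring
  rw [heq]
  apply Real.rpow_lt_one (by positivity) _ hH
  rw [inv_lt_one₀ (by linarith)]
  exact hp1

lemma nat_rpow_gt_one (p : ℕ) (hp : 2 ≤ p) (H : ℝ) (hH : 0 < H) :
    1 < (p : ℝ) ^ H := by
  have hp1 : (1:ℝ) < (p:ℝ) := by exact_mod_cast hp
  rw [Real.one_lt_rpow_iff_of_pos (by linarith)]
  exact Or.inl ⟨hp1, hH⟩


/-- Purely arithmetic form of the classification theorem: a completely multiplicative
function satisfying the two growth conditions is of exactly one of the three types. -/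
theorem stmt2 (b : ℕ → ℝ) (hbpos : ∀ n : ℕ, 1 ≤ n → 0 < b n)
    (hmul : ∀ m n : ℕ, 1 ≤ m → 1 ≤ n → b (m * n) = b m * b n)
    (τ : ℕ) (hτ : 1 ≤ τ)
    (h1 : ∀ m : ℕ, 1 ≤ m → ∀ k : ℝ, 1 < k → ∃ c : ℝ, ∀ n : ℕ, 1 ≤ n →
      b (n + m) ≤ k * b n + c)
    (h2 : (∀ n : ℕ, 1 ≤ n → b n = 1) ∨
      (∀ m : ℕ, 1 ≤ m → ∃ d : ℝ, 0 < d ∧ ∀ n : ℕ, 1 ≤ n →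
        d ≤ max (b (n * τ)) (b (n * τ + m)))) :
    ((∀ n : ℕ, 1 ≤ n → b n = 1) ∧
      ¬ (∃ p : ℕ, p.Prime ∧ ∃ H : ℝ, 0 < H ∧ ∀ n : ℕ, 1 ≤ n →
          b n = (padicNormNat p n) ^ H) ∧
      ¬ (∃ H : ℝ, 0 < H ∧ ∀ n : ℕ, 1 ≤ n → b n = (n : ℝ) ^ H)) ∨
    ((¬ ∀ n : ℕ, 1 ≤ n → b n = 1) ∧
      (∃ p : ℕ, p.Prime ∧ ∃ H : ℝ, 0 < H ∧ ∀ n : ℕ, 1 ≤ n →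
          b n = (padicNormNat p n) ^ H) ∧
      ¬ (∃ H : ℝ, 0 < H ∧ ∀ n : ℕ, 1 ≤ n → b n = (n : ℝ) ^ H)) ∨
    ((¬ ∀ n : ℕ, 1 ≤ n → b n = 1) ∧
      ¬ (∃ p : ℕ, p.Prime ∧ ∃ H : ℝ, 0 < H ∧ ∀ n : ℕ, 1 ≤ n →
          b n = (padicNormNat p n) ^ H) ∧
      (∃ H : ℝ, 0 < H ∧ ∀ n : ℕ, 1 ≤ n → b n = (n : ℝ) ^ H)) := by

  have hb1 : b 1 = 1 := b_one b hbpos hmul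
  have h12 : (∀ n : ℕ, 1 ≤ n → b n = 1) →
      ¬ (∃ p : ℕ, p.Prime ∧ ∃ H : ℝ, 0 < H ∧ ∀ n : ℕ, 1 ≤ n →
        b n = (padicNormNat p n) ^ H) := by
    rintro hall ⟨p, hp, H, hH, hf⟩
    have h1' := hf p hp.one_lt.le
    have h2' := hall p hp.one_lt.le
    have h3' := padic_self_lt_one p hp H hH
    rw [h2'] at h1'
    rw [← h1'] at h3'
    linarith
  have h13 : (∀ n : ℕ, 1 ≤ n → b n = 1) →
      ¬ (∃ H : ℝ, 0 < H ∧ ∀ n : ℕ, 1 ≤ n → b n = (n : ℝ) ^ H) := by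
    rintro hall ⟨H, hH, hf⟩
    have h1' := hf 2 (by omega)
    have h2' := hall 2 (by omega)
    have h3' := nat_rpow_gt_one 2 le_rfl H hH
    rw [h2'] at h1'
    rw [← h1'] at h3'
    linarith
  have h23 : (∃ p : ℕ, p.Prime ∧ ∃ H : ℝ, 0 < H ∧ ∀ n : ℕ, 1 ≤ n →
        b n = (padicNormNat p n) ^ H) →
      ¬ (∃ H : ℝ, 0 < H ∧ ∀ n : ℕ, 1 ≤ n → b n = (n : ℝ) ^ H) := by
    rintro ⟨p, hp, H1, hH1, hf1⟩ ⟨H2, hH2, hf2⟩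
    have h1' := hf1 p hp.one_lt.le
    have h2' := hf2 p hp.one_lt.le
    have h3' := padic_self_lt_one p hp H1 hH1
    have h4' := nat_rpow_gt_one p hp.two_le H2 hH2
    rw [h1'] at h2'
    rw [h2'] at h3'
    linarith
  rcases h2 with hall | hstar
  · exact Or.inl ⟨hall, h12 hall, h13 hall⟩
  by_cases hP1 : ∀ n : ℕ, 1 ≤ n → b n = 1
  · exact Or.inl ⟨hP1, h12 hP1, h13 hP1⟩
  by_cases hbig : ∃ n0 : ℕ, 1 ≤ n0 ∧ 1 < b n0
  · obtain ⟨n0, hn01, hb0⟩ := hbig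
    have hP3 := caseII b hbpos hmul h1 n0 hn01 hb0
    exact Or.inr (Or.inr ⟨hP1, fun hP2 => h23 hP2 hP3, hP3⟩)
  · push_neg at hbig hP1
    obtain ⟨n1, hn11, hbn1⟩ := hP1
    have hP2 := caseI b hbpos hmul τ hτ hstar hbig n1 hn11 hbn1
    refine Or.inr (Or.inl ⟨?_, hP2, fun hP3 => h23 hP2 hP3⟩)
    intro hall
    exact hbn1 (hall n1 hn11)
end
end

section
/- Let G₁, G₂, G₃ be Borel probability measures on ℝ with G₁({0}) < 1. Then there exist real constants k₂, k₃ such that for all a₁, a₂, a₃ ≥ 0 with a₁ > k₂·a₂ + k₃·a₃, there do not exist a probability space and random variables Y₁, Y₂, Y₃ on it with Y₁ + Y₂ + Y₃ = 0 almost surely and with the law of Y_i equal to the pushforward of G_i under the map x ↦ a_i·x, for i = 1, 2, 3. -/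
open MeasureTheory ProbabilityTheory

noncomputable section

lemma tail_small (G : Measure ℝ) [IsProbabilityMeasure G] (ε : ENNReal) (hε : ε ≠ 0) :
    ∃ c : ℝ, 0 ≤ c ∧ G {x | c < |x|} < ε := by
  have hmeas : ∀ n : ℕ, MeasurableSet {x : ℝ | (n : ℝ) < |x|} := fun n =>
    measurableSet_lt measurable_const measurable_abs
  have hanti : Antitone (fun n : ℕ => {x : ℝ | (n : ℝ) < |x|}) := by
    intro m n hmn x hx
    exact lt_of_le_of_lt (Nat.cast_le.mpr hmn : (m:ℝ) ≤ (n:ℝ)) hx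
  have hinter : (⋂ n : ℕ, {x : ℝ | (n : ℝ) < |x|}) = ∅ := by
    ext x
    simp only [Set.mem_iInter, Set.mem_setOf_eq, Set.mem_empty_iff_false, iff_false, not_forall,
      not_lt]
    obtain ⟨n, hn⟩ := exists_nat_gt |x|
    exact ⟨n, hn.le⟩
  have htend := tendsto_measure_iInter_atTop (μ := G)
    (fun n => (hmeas n).nullMeasurableSet) hanti ⟨0, measure_ne_top G _⟩
  rw [hinter] at htend
  simp only [measure_empty] at htend
  have := htend.eventually_lt_const (hε.bot_lt)
  obtain ⟨n, hn⟩ := this.exists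
  exact ⟨n, Nat.cast_nonneg n, hn⟩

/-- Proposition 2.1: if `G₁` is not concentrated at `0`, there are constants `k₂, k₃` such
that whenever `a₁ > k₂·a₂ + k₃·a₃` (with `a₁, a₂, a₃ ≥ 0`), no random variables `Yᵢ` with
`Yᵢ/aᵢ ∼ Gᵢ` can sum to zero almost surely. -/
theorem stmt3 (G₁ G₂ G₃ : Measure ℝ)
    [IsProbabilityMeasure G₁] [IsProbabilityMeasure G₂] [IsProbabilityMeasure G₃]
    (hG₁ : G₁ {0} < 1) :
    ∃ k₂ k₃ : ℝ, ∀ a₁ a₂ a₃ : ℝ, 0 ≤ a₁ → 0 ≤ a₂ → 0 ≤ a₃ →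
      k₂ * a₂ + k₃ * a₃ < a₁ →
      ¬ ∃ (Ω : Type) (_ : MeasurableSpace Ω) (P : Measure Ω),
          IsProbabilityMeasure P ∧
          ∃ Y₁ Y₂ Y₃ : Ω → ℝ, Measurable Y₁ ∧ Measurable Y₂ ∧ Measurable Y₃ ∧
            (∀ᵐ ω ∂P, Y₁ ω + Y₂ ω + Y₃ ω = 0) ∧
            Measure.map Y₁ P = Measure.map (fun x => a₁ * x) G₁ ∧
            Measure.map Y₂ P = Measure.map (fun x => a₂ * x) G₂ ∧
            Measure.map Y₃ P = Measure.map (fun x => a₃ * x) G₃ := by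
  -- find δ > 0 with ε := G₁ {x | δ < |x|} > 0
  have hne : (0 : ENNReal) < G₁ {(0:ℝ)}ᶜ := by
    rw [prob_compl_eq_one_sub (measurableSet_singleton 0)]
    exact tsub_pos_iff_lt.mpr hG₁
  have hUnion : ({(0:ℝ)}ᶜ : Set ℝ) ⊆ ⋃ n : ℕ, {x : ℝ | 1 / ((n:ℝ) + 1) < |x|} := by
    intro x hx
    have hx0 : x ≠ 0 := hx
    obtain ⟨n, hn⟩ := exists_nat_one_div_lt (abs_pos.mpr hx0)
    exact Set.mem_iUnion.mpr ⟨n, hn⟩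
  have : ∃ n : ℕ, G₁ {x : ℝ | 1 / ((n:ℝ) + 1) < |x|} ≠ 0 := by
    by_contra h
    push_neg at h
    have := measure_mono_null hUnion (measure_iUnion_null h)
    exact hne.ne' this
  obtain ⟨n, hεne⟩ := this
  set δ : ℝ := 1 / ((n:ℝ) + 1) with hδdef
  have hδpos : 0 < δ := by positivity
  set ε : ENNReal := G₁ {x : ℝ | δ < |x|} with hεdef
  have hε3 : ε / 3 ≠ 0 := by
    simp [ENNReal.div_eq_zero_iff, hεne]
  obtain ⟨c₂, hc₂0, hc₂⟩ := tail_small G₂ (ε / 3) hε3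
  obtain ⟨c₃, hc₃0, hc₃⟩ := tail_small G₃ (ε / 3) hε3
  refine ⟨c₂ / δ, c₃ / δ, ?_⟩
  intro a₁ a₂ a₃ ha₁ ha₂ ha₃ hlt
  rintro ⟨Ω, mΩ, P, hP, Y₁, Y₂, Y₃, hm₁, hm₂, hm₃, hae, hL₁, hL₂, hL₃⟩
  -- a₁ > 0
  have hk₂ : 0 ≤ c₂ / δ := div_nonneg hc₂0 hδpos.le
  have hk₃ : 0 ≤ c₃ / δ := div_nonneg hc₃0 hδpos.le
  have ha₁pos : 0 < a₁ :=
    lt_of_le_of_lt (add_nonneg (mul_nonneg hk₂ ha₂) (mul_nonneg hk₃ ha₃)) hlt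
  -- key real inequality
  have hkey : a₂ * c₂ + a₃ * c₃ < a₁ * δ := by
    rw [div_mul_eq_mul_div, div_mul_eq_mul_div, ← add_div, div_lt_iff₀ hδpos] at hlt
    linarith
  -- the three sets
  set A : Set Ω := {ω | a₁ * δ < |Y₁ ω|} with hA
  set B : Set Ω := {ω | a₂ * c₂ < |Y₂ ω|} with hB
  set C : Set Ω := {ω | a₃ * c₃ < |Y₃ ω|} with hC
  have hmA : ∀ t : ℝ, MeasurableSet {x : ℝ | t < |x|} := fun t =>
    measurableSet_lt measurable_const measurable_abs
  -- P A = ε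
  have hPA : P A = ε := by
    have : A = Y₁ ⁻¹' {x : ℝ | a₁ * δ < |x|} := rfl
    rw [this, ← Measure.map_apply hm₁ (hmA _), hL₁,
      Measure.map_apply (measurable_const_mul a₁) (hmA _)]
    congr 1
    ext x
    simp only [Set.mem_preimage, Set.mem_setOf_eq, abs_mul, abs_of_pos ha₁pos]
    exact mul_lt_mul_iff_right₀ ha₁pos
  have hPB : P B ≤ G₂ {x : ℝ | c₂ < |x|} := by
    have : B = Y₂ ⁻¹' {x : ℝ | a₂ * c₂ < |x|} := rfl
    rw [this, ← Measure.map_apply hm₂ (hmA _), hL₂,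
      Measure.map_apply (measurable_const_mul a₂) (hmA _)]
    refine measure_mono ?_
    intro x hx
    simp only [Set.mem_preimage, Set.mem_setOf_eq, abs_mul] at hx ⊢
    rcases ha₂.eq_or_lt with h | h
    · exfalso; rw [← h] at hx; simp at hx
    · rw [abs_of_pos h] at hx
      exact (mul_lt_mul_iff_right₀ h).mp hx
  have hPC : P C ≤ G₃ {x : ℝ | c₃ < |x|} := by
    have : C = Y₃ ⁻¹' {x : ℝ | a₃ * c₃ < |x|} := rfl
    rw [this, ← Measure.map_apply hm₃ (hmA _), hL₃,
      Measure.map_apply (measurable_const_mul a₃) (hmA _)]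
    refine measure_mono ?_
    intro x hx
    simp only [Set.mem_preimage, Set.mem_setOf_eq, abs_mul] at hx ⊢
    rcases ha₃.eq_or_lt with h | h
    · exfalso; rw [← h] at hx; simp at hx
    · rw [abs_of_pos h] at hx
      exact (mul_lt_mul_iff_right₀ h).mp hx
  -- P (B ∪ C) < ε
  have hBC : P (B ∪ C) < ε := by
    calc P (B ∪ C) ≤ P B + P C := measure_union_le _ _
      _ < ε / 3 + ε / 3 := ENNReal.add_lt_add (lt_of_le_of_lt hPB hc₂) (lt_of_le_of_lt hPC hc₃)
      _ < ε / 3 + ε / 3 + ε / 3 := ENNReal.lt_add_right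
          (ENNReal.add_ne_top.mpr ⟨(ENNReal.div_lt_top (measure_ne_top G₁ _) (by norm_num)).ne,
            (ENNReal.div_lt_top (measure_ne_top G₁ _) (by norm_num)).ne⟩) hε3
      _ = ε := ENNReal.add_thirds ε
  -- positive measure of A \ (B ∪ C)
  have hpos : 0 < P (A \ (B ∪ C)) := by
    refine lt_of_lt_of_le ?_ (le_measure_diff)
    rw [hPA]
    exact tsub_pos_iff_lt.mpr hBC
  -- find a point
  have hbad : ¬ (A \ (B ∪ C)) ⊆ {ω | ¬ (Y₁ ω + Y₂ ω + Y₃ ω = 0)} := by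
    intro hsub
    have h0 : P {ω | ¬ (Y₁ ω + Y₂ ω + Y₃ ω = 0)} = 0 := hae
    exact hpos.ne' (measure_mono_null hsub h0)
  obtain ⟨ω, hωmem, hωsum⟩ := Set.not_subset.mp hbad
  push_neg at hωsum
  obtain ⟨hωA, hωBC⟩ := hωmem
  simp only [Set.mem_union, not_or, hA, hB, hC, Set.mem_setOf_eq, not_lt] at hωA hωBC
  obtain ⟨hωB, hωC⟩ := hωBC
  have hsum : Y₁ ω + Y₂ ω + Y₃ ω = 0 := by simpa using hωsum
  have h1 : Y₁ ω = -(Y₂ ω + Y₃ ω) := by linarith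
  have : |Y₁ ω| ≤ a₂ * c₂ + a₃ * c₃ := by
    rw [h1, abs_neg]
    exact (abs_add_le _ _).trans (add_le_add hωB hωC)
  linarith
end
end

section
/- Let G₁, G₂, G₃ be Borel probability measures on ℝ with G₁({0}) < 1, and suppose that G₁(B) = G₂(−B) for every Borel set B ⊆ ℝ (where −B = {−x : x ∈ B}). Then for every real k₂ > 1 there exists k₃ ∈ ℝ such that for all a₁, a₂, a₃ ≥ 0 with a₁ > k₂·a₂ + k₃·a₃, there do not exist a probability space and random variables Y₁, Y₂, Y₃ on it with Y₁ + Y₂ + Y₃ = 0 almost surely and with the law of Y_i equal to the pushforward of G_i under the map x ↦ a_i·x, for i = 1, 2, 3. -/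
open MeasureTheory ProbabilityTheory Filter Topology

noncomputable section

lemma tail_meas (c : ℝ) : MeasurableSet {x : ℝ | c ≤ |x|} :=
  (isClosed_le continuous_const continuous_abs).measurableSet

lemma tail_tendsto (μ : Measure ℝ) [IsFiniteMeasure μ] (c : ℕ → ℝ)
    (hmono : Monotone c) (htop : Tendsto c atTop atTop) :
    Tendsto (fun n => μ {x : ℝ | c n ≤ |x|}) atTop (𝓝 0) := by
  have hanti : Antitone (fun n => {x : ℝ | c n ≤ |x|}) := by
    intro m n hmn x hx
    exact le_trans (hmono hmn) hx
  have hint : ⋂ n, {x : ℝ | c n ≤ |x|} = (∅ : Set ℝ) := by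
    ext x
    simp only [Set.mem_iInter, Set.mem_setOf_eq, Set.mem_empty_iff_false, iff_false]
    intro h
    obtain ⟨n, hn⟩ := (htop.eventually (eventually_gt_atTop |x|)).exists
    exact absurd (h n) (not_le.2 hn)
  have h := tendsto_measure_iInter_atTop (μ := μ) (s := fun n => {x : ℝ | c n ≤ |x|})
    (fun n => (tail_meas _).nullMeasurableSet) hanti ⟨0, measure_ne_top μ _⟩
  rw [hint] at h
  simpa [Function.comp_def] using h

lemma exists_pos_tail (G : Measure ℝ) [IsProbabilityMeasure G] (h : G {0} < 1) :
    ∃ t : ℝ, 0 < t ∧ 0 < G {x : ℝ | t ≤ |x|} := by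
  by_contra hc
  push_neg at hc
  have h0 : ∀ n : ℕ, G {x : ℝ | 1/(n+1 : ℝ) ≤ |x|} = 0 := fun n =>
    le_antisymm (hc _ (by positivity)) (by simp)
  have hcompl : G ({0}ᶜ : Set ℝ) = 0 := by
    refine measure_mono_null ?_ (measure_iUnion_null h0)
    intro x hx
    simp only [Set.mem_compl_iff, Set.mem_singleton_iff] at hx
    have hpos : 0 < |x| := abs_pos.2 hx
    obtain ⟨n, hn⟩ := exists_nat_one_div_lt hpos
    exact Set.mem_iUnion.2 ⟨n, le_of_lt hn⟩
  rw [prob_compl_eq_zero_iff (measurableSet_singleton 0)] at hcompl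
  exact absurd hcompl h.ne

lemma neg_image_tail (c : ℝ) : (fun x : ℝ => -x) '' {x : ℝ | c ≤ |x|} = {x : ℝ | c ≤ |x|} := by
  ext y
  constructor
  · rintro ⟨x, hx, rfl⟩
    simpa using hx
  · intro hy
    exact ⟨-y, by simpa using hy, by simp⟩

set_option maxHeartbeats 1000000 in
/-- Proposition 2.2: if moreover `G₁(B) = G₂(-B)` for all Borel `B`, then for every
`k₂ > 1` a suitable `k₃` exists. -/
theorem stmt4 (G₁ G₂ G₃ : Measure ℝ)
    [IsProbabilityMeasure G₁] [IsProbabilityMeasure G₂] [IsProbabilityMeasure G₃]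
    (hG₁ : G₁ {0} < 1)
    (hsym : ∀ B : Set ℝ, MeasurableSet B → G₁ B = G₂ ((fun x => -x) '' B)) :
    ∀ k₂ : ℝ, 1 < k₂ → ∃ k₃ : ℝ, ∀ a₁ a₂ a₃ : ℝ, 0 ≤ a₁ → 0 ≤ a₂ → 0 ≤ a₃ →
      k₂ * a₂ + k₃ * a₃ < a₁ →
      ¬ ∃ (Ω : Type) (_ : MeasurableSpace Ω) (P : Measure Ω),
          IsProbabilityMeasure P ∧
          ∃ Y₁ Y₂ Y₃ : Ω → ℝ, Measurable Y₁ ∧ Measurable Y₂ ∧ Measurable Y₃ ∧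
            (∀ᵐ ω ∂P, Y₁ ω + Y₂ ω + Y₃ ω = 0) ∧
            Measure.map Y₁ P = Measure.map (fun x => a₁ * x) G₁ ∧
            Measure.map Y₂ P = Measure.map (fun x => a₂ * x) G₂ ∧
            Measure.map Y₃ P = Measure.map (fun x => a₃ * x) G₃ := by
  intro k₂ hk₂
  set r : ℝ := (1 + k₂) / 2 with hr_def
  have hr1 : 1 < r := by simp only [hr_def]; linarith
  have hrk : r < k₂ := by simp only [hr_def]; linarith
  have hk₂0 : (0:ℝ) < k₂ := by linarith
  set lam : ℝ := r / k₂ with hlam_def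
  have hlam_pos : 0 < lam := div_pos (by linarith) hk₂0
  have hlam_lt1 : lam < 1 := (div_lt_one hk₂0).2 hrk
  have hlamk : lam * k₂ = r := div_mul_cancel₀ r hk₂0.ne'
  -- choose t₀ with positive tail
  obtain ⟨t₀, ht₀, htail⟩ := exists_pos_tail G₁ hG₁
  -- find m with strict decrease along the sequence t₀ * r^m
  have hc_mono : Monotone (fun m : ℕ => t₀ * r ^ m) :=
    fun m n hmn => mul_le_mul_of_nonneg_left (pow_le_pow_right₀ hr1.le hmn) ht₀.le
  have hc_top : Tendsto (fun m : ℕ => t₀ * r ^ m) atTop atTop :=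
    (tendsto_pow_atTop_atTop_of_one_lt hr1).const_mul_atTop ht₀
  have hf0 := tail_tendsto G₁ (fun m : ℕ => t₀ * r ^ m) hc_mono hc_top
  have hexm : ∃ m : ℕ, G₁ {x : ℝ | t₀ * r ^ (m+1) ≤ |x|} < G₁ {x : ℝ | t₀ * r ^ m ≤ |x|} := by
    by_contra hcm
    push_neg at hcm
    have hconst : ∀ m : ℕ, G₁ {x : ℝ | t₀ * r ^ 0 ≤ |x|} ≤ G₁ {x : ℝ | t₀ * r ^ m ≤ |x|} := by
      intro m
      induction m with
      | zero => exact le_refl _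
      | succ n ih => exact le_trans ih (hcm n)
    have hev := hf0.eventually_lt_const (by simpa using htail)
    obtain ⟨m, hm⟩ := hev.exists
    exact absurd (hconst m) (not_le.2 (by simpa using hm))
  obtain ⟨m, hm⟩ := hexm
  set t : ℝ := t₀ * r ^ m with ht_def
  have ht : 0 < t := mul_pos ht₀ (pow_pos (by linarith) m)
  have hts : t₀ * r ^ (m+1) = t * r := by rw [ht_def, pow_succ]; ring
  set α := G₁ {x : ℝ | t ≤ |x|} with hα_def
  set β := G₁ {x : ℝ | t * r ≤ |x|} with hβ_def
  have hβα : β < α := by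
    have : G₁ {x : ℝ | t * r ≤ |x|} < α := by rw [← hts]; exact hm
    exact this
  have hβ_le : β ≤ α := le_of_lt hβα
  have hβ_ne : β ≠ ⊤ := (measure_lt_top G₁ _).ne
  have hδ : 0 < α - β := tsub_pos_of_lt hβα
  -- choose N for G₃
  have hG3 := tail_tendsto G₃ (fun n : ℕ => (n : ℝ)) (fun a b h => Nat.cast_le.2 h)
    tendsto_natCast_atTop_atTop
  obtain ⟨N, hN⟩ := (hG3.eventually_lt_const hδ).exists
  -- define k₃
  set k₃ : ℝ := max 1 ((N : ℝ) / ((1 - lam) * t)) with hk₃_def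
  have hk₃1 : (1:ℝ) ≤ k₃ := le_max_left _ _
  have hk₃N : (N : ℝ) ≤ (1 - lam) * k₃ * t := by
    have h1 : 0 < (1 - lam) * t := mul_pos (by linarith) ht
    have h2 : (N : ℝ) / ((1 - lam) * t) ≤ k₃ := le_max_right _ _
    calc (N : ℝ) = (N : ℝ) / ((1 - lam) * t) * ((1 - lam) * t) := by
          rw [div_mul_cancel₀ _ h1.ne']
      _ ≤ k₃ * ((1 - lam) * t) := by
          exact mul_le_mul_of_nonneg_right h2 (le_of_lt h1)
      _ = (1 - lam) * k₃ * t := by ring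
  refine ⟨k₃, ?_⟩
  intro a₁ a₂ a₃ ha₁ ha₂ ha₃ hlt
  rintro ⟨Ω, mΩ, P, hP, Y₁, Y₂, Y₃, hY₁, hY₂, hY₃, hsum, hL₁, hL₂, hL₃⟩
  have hp₂ : 0 ≤ k₂ * a₂ := mul_nonneg hk₂0.le ha₂
  have hp₃ : 0 ≤ k₃ * a₃ := mul_nonneg (by linarith : (0:ℝ) ≤ k₃) ha₃
  have ha₁pos : 0 < a₁ := by linarith
  have ha₁₂ : k₂ * a₂ ≤ a₁ := by linarith
  have ha₁₃ : k₃ * a₃ ≤ a₁ := by linarith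
  set s : ℝ := a₁ * t with hs_def
  have hs : 0 < s := mul_pos ha₁pos ht
  -- P(E₁) = α
  have hE₁ : P (Y₁ ⁻¹' {y : ℝ | s ≤ |y|}) = α := by
    rw [← Measure.map_apply hY₁ (tail_meas s), hL₁,
      Measure.map_apply (measurable_const_mul a₁) (tail_meas s)]
    congr 1
    ext x
    simp only [Set.mem_preimage, Set.mem_setOf_eq, hs_def, abs_mul, abs_of_pos ha₁pos]
    exact mul_le_mul_iff_right₀ ha₁pos
  -- P(E₂) ≤ β
  have hE₂ : P (Y₂ ⁻¹' {y : ℝ | lam * s ≤ |y|}) ≤ β := by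
    rw [← Measure.map_apply hY₂ (tail_meas _), hL₂,
      Measure.map_apply (measurable_const_mul a₂) (tail_meas _)]
    have hsub : (fun x => a₂ * x) ⁻¹' {y : ℝ | lam * s ≤ |y|} ⊆ {x : ℝ | t * r ≤ |x|} := by
      intro x hx
      simp only [Set.mem_preimage, Set.mem_setOf_eq, abs_mul, abs_of_nonneg ha₂] at hx ⊢
      have ha₂pos : 0 < a₂ := by
        rcases lt_or_eq_of_le ha₂ with h | h
        · exact h
        · exfalso; rw [← h] at hx; simp at hx
          exact absurd hx (not_le.2 (mul_pos hlam_pos hs))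
      have h2 : lam * (k₂ * a₂) * t ≤ lam * a₁ * t :=
        mul_le_mul_of_nonneg_right (mul_le_mul_of_nonneg_left ha₁₂ hlam_pos.le) ht.le
      have h3 : lam * (k₂ * a₂) * t = r * a₂ * t := by rw [← hlamk]; ring
      have h4 : a₂ * (t * r) ≤ a₂ * |x| := by
        calc a₂ * (t * r) = lam * (k₂ * a₂) * t := by rw [h3]; ring
          _ ≤ lam * a₁ * t := h2
          _ = lam * s := by rw [hs_def]; ring
          _ ≤ a₂ * |x| := hx
      exact le_of_mul_le_mul_left h4 ha₂pos
    calc G₂ ((fun x => a₂ * x) ⁻¹' {y : ℝ | lam * s ≤ |y|})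
        ≤ G₂ {x : ℝ | t * r ≤ |x|} := measure_mono hsub
      _ = β := by rw [hβ_def, hsym _ (tail_meas _), neg_image_tail]
  -- P(E₃) ≤ G₃ tail at N
  have hE₃ : P (Y₃ ⁻¹' {y : ℝ | (1 - lam) * s ≤ |y|}) ≤ G₃ {x : ℝ | (N : ℝ) ≤ |x|} := by
    rw [← Measure.map_apply hY₃ (tail_meas _), hL₃,
      Measure.map_apply (measurable_const_mul a₃) (tail_meas _)]
    refine measure_mono ?_
    intro x hx
    simp only [Set.mem_preimage, Set.mem_setOf_eq, abs_mul, abs_of_nonneg ha₃] at hx ⊢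
    have ha₃pos : 0 < a₃ := by
      rcases lt_or_eq_of_le ha₃ with h | h
      · exact h
      · exfalso; rw [← h] at hx; simp at hx
        exact absurd hx (not_le.2 (mul_pos (by linarith : (0:ℝ) < 1 - lam) hs))
    have h2 : (1 - lam) * (k₃ * a₃) * t ≤ (1 - lam) * a₁ * t :=
      mul_le_mul_of_nonneg_right
        (mul_le_mul_of_nonneg_left ha₁₃ (by linarith : (0:ℝ) ≤ 1 - lam)) ht.le
    have h4 : a₃ * (N : ℝ) ≤ a₃ * |x| := by
      calc a₃ * (N : ℝ) ≤ a₃ * ((1 - lam) * k₃ * t) :=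
            mul_le_mul_of_nonneg_left hk₃N ha₃
        _ = (1 - lam) * (k₃ * a₃) * t := by ring
        _ ≤ (1 - lam) * a₁ * t := h2
        _ = (1 - lam) * s := by rw [hs_def]; ring
        _ ≤ a₃ * |x| := hx
    exact le_of_mul_le_mul_left h4 ha₃pos
  -- a.e. inclusion
  have hincl : ∀ᵐ ω ∂P, ω ∈ Y₁ ⁻¹' {y : ℝ | s ≤ |y|} →
      ω ∈ Y₂ ⁻¹' {y : ℝ | lam * s ≤ |y|} ∪ Y₃ ⁻¹' {y : ℝ | (1 - lam) * s ≤ |y|} := by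
    filter_upwards [hsum] with ω hω h₁
    simp only [Set.mem_preimage, Set.mem_setOf_eq, Set.mem_union] at h₁ ⊢
    by_contra hc
    push_neg at hc
    obtain ⟨hc₂, hc₃⟩ := hc
    have : |Y₁ ω| ≤ |Y₂ ω| + |Y₃ ω| := by
      have : Y₁ ω = -(Y₂ ω + Y₃ ω) := by linarith
      rw [this, abs_neg]
      exact abs_add_le _ _
    linarith
  have hmain : α ≤ β + G₃ {x : ℝ | (N : ℝ) ≤ |x|} := by
    calc α = P (Y₁ ⁻¹' {y : ℝ | s ≤ |y|}) := hE₁.symm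
      _ ≤ P (Y₂ ⁻¹' {y : ℝ | lam * s ≤ |y|} ∪ Y₃ ⁻¹' {y : ℝ | (1 - lam) * s ≤ |y|}) :=
          measure_mono_ae hincl
      _ ≤ P (Y₂ ⁻¹' {y : ℝ | lam * s ≤ |y|}) + P (Y₃ ⁻¹' {y : ℝ | (1 - lam) * s ≤ |y|}) :=
          measure_union_le _ _
      _ ≤ β + G₃ {x : ℝ | (N : ℝ) ≤ |x|} := add_le_add hE₂ hE₃
  have hfinal : β + G₃ {x : ℝ | (N : ℝ) ≤ |x|} < α := by
    calc β + G₃ {x : ℝ | (N : ℝ) ≤ |x|} < β + (α - β) :=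
        ENNReal.add_lt_add_left hβ_ne hN
      _ = α := add_tsub_cancel_of_le hβ_le
  exact absurd hmain (not_le.2 hfinal)
end
end

section
/- Let τ ∈ ℕ and let X = (X_n)_{n∈ℕ₀} be a discrete-time stochastic process that is marginally self-similar with scaling function b : ℕ → (0,∞) and has marginally cyclostationary increments with period τ, and assume P(X₁ = 0) < 1. Then for every m ∈ ℕ and every real k > 1 there exists c ∈ ℝ such that b(n+m) ≤ k·b(n) + c for all n ∈ ℕ. -/
open MeasureTheory ProbabilityTheory

noncomputable section

open Filter


lemma tail_tendsto_s5 {Ω : Type*} [MeasurableSpace Ω] (P : Measure Ω) [IsProbabilityMeasure P]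
    (f : Ω → ℝ) (hf : Measurable f) :
    Tendsto (fun s : ℕ => P {ω | (s:ℝ) < |f ω|}) atTop (nhds 0) := by
  have hmeas : ∀ s : ℕ, NullMeasurableSet {ω | (s:ℝ) < |f ω|} P := by
    intro s
    exact (measurableSet_lt measurable_const hf.abs).nullMeasurableSet
  have hanti : Antitone (fun s : ℕ => {ω | (s:ℝ) < |f ω|}) := by
    intro i j hij ω hω
    simp only [Set.mem_setOf_eq] at hω ⊢
    exact lt_of_le_of_lt (Nat.cast_le.mpr hij) hω
  have h := tendsto_measure_iInter_atTop (μ := P) hmeas hanti ⟨0, measure_ne_top _ _⟩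
  have hempty : (⋂ s : ℕ, {ω | (s:ℝ) < |f ω|}) = ∅ := by
    ext ω
    simp only [Set.mem_iInter, Set.mem_setOf_eq, Set.mem_empty_iff_false, iff_false, not_forall,
      not_lt]
    obtain ⟨s, hs⟩ := exists_nat_ge (|f ω|)
    exact ⟨s, hs⟩
  rw [hempty] at h
  simpa [Function.comp_def] using h

lemma tail_small_s5 {Ω : Type*} [MeasurableSpace Ω] (P : Measure Ω) [IsProbabilityMeasure P]
    (f : Ω → ℝ) (hf : Measurable f) {ε : ENNReal} (hε : 0 < ε) :
    ∃ s : ℕ, P {ω | (s:ℝ) < |f ω|} ≤ ε := by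
  have := (tail_tendsto_s5 P f hf).eventually_lt_const hε
  obtain ⟨s, hs⟩ := this.exists
  exact ⟨s, hs.le⟩

lemma nondeg {Ω : Type*} [MeasurableSpace Ω] (P : Measure Ω) [IsProbabilityMeasure P]
    (f : Ω → ℝ) (hf : Measurable f) (hnd : P {ω | f ω = 0} < 1) :
    ∃ a : ℝ, 0 < a ∧ P {ω | a < |f ω|} ≠ 0 := by
  by_contra h
  push_neg at h
  have hU : {ω | f ω ≠ 0} = ⋃ n : ℕ, {ω | (1:ℝ)/(n+1) < |f ω|} := by
    ext ω
    simp only [Set.mem_setOf_eq, Set.mem_iUnion]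
    constructor
    · intro hω
      obtain ⟨n, hn⟩ := exists_nat_one_div_lt (abs_pos.mpr hω)
      exact ⟨n, hn⟩
    · rintro ⟨n, hn⟩
      intro h0
      rw [h0, abs_zero] at hn
      exact absurd hn (by positivity : (0:ℝ) < 1/((n:ℝ)+1)).asymm
  have hnull : P {ω | f ω ≠ 0} = 0 := by
    rw [hU]
    exact measure_iUnion_null fun n => h ((1:ℝ)/(n+1)) (by positivity)
  have hc : {ω | f ω = 0} = {ω | f ω ≠ 0}ᶜ := by ext ω; simp
  have hm : MeasurableSet {ω | f ω ≠ 0} := (hf (measurableSet_singleton 0)).compl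
  rw [hc, measure_compl hm (measure_ne_top _ _), hnull] at hnd
  simp at hnd

lemma scale_tail {Ω : Type*} [MeasurableSpace Ω] (P : Measure Ω) (f g : Ω → ℝ) {β : ℝ}
    (hβ : 0 < β) (h : IdentDistrib f (fun ω => β * g ω) P P) (t : ℝ) :
    P {ω | t < |f ω|} = P {ω | t / β < |g ω|} := by
  have hs : MeasurableSet {x : ℝ | t < |x|} := measurableSet_lt measurable_const measurable_abs
  have e := h.measure_mem_eq hs
  simp only [Set.preimage_setOf_eq] at e
  rw [e]
  congr 1
  ext ω
  simp only [Set.mem_setOf_eq, abs_mul, abs_of_pos hβ]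
  rw [div_lt_iff₀ hβ, mul_comm]

/-- Corollary 2.3: the scaling function of a marginally self-similar process with
marginally cyclostationary increments grows at most almost-subadditively. -/
theorem stmt5 {Ω : Type*} [MeasurableSpace Ω] (P : Measure Ω) [IsProbabilityMeasure P]
    (X : ℕ → Ω → ℝ) (hXmeas : ∀ n, Measurable (X n))
    (b : ℕ → ℝ) (hbpos : ∀ n : ℕ, 1 ≤ n → 0 < b n) (τ : ℕ) (hτ : 1 ≤ τ)
    (hss : ∀ (n : ℕ), 1 ≤ n → ∀ (m : ℕ),
      IdentDistrib (X (n * m)) (fun ω => b n * X m ω) P P)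
    (hcsi : ∀ k m : ℕ, IdentDistrib (fun ω => X (m + 1) ω - X m ω)
      (fun ω => X (m + k * τ + 1) ω - X (m + k * τ) ω) P P)
    (hnd : P {ω | X 1 ω = 0} < 1) :
    ∀ m : ℕ, 1 ≤ m → ∀ k : ℝ, 1 < k → ∃ c : ℝ, ∀ n : ℕ, 1 ≤ n →
      b (n + m) ≤ k * b n + c := by
  intro m hm k hk
  -- the tail function of |X 1|
  set F : ℝ → ENNReal := fun t => P {ω | t < |X 1 ω|} with hF
  -- nondegeneracy
  obtain ⟨a, ha, hδ⟩ := nondeg P (X 1) (hXmeas 1) hnd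
  set δ : ENNReal := P {ω | a < |X 1 ω|} with hδdef
  have hδtop : δ ≠ ⊤ := measure_ne_top _ _
  -- choose S with small tail
  have hδ4 : (0:ENNReal) < δ / 4 := ENNReal.div_pos hδ (by norm_num)
  obtain ⟨S, hS⟩ := tail_small_s5 P (X 1) (hXmeas 1) hδ4
  -- choose j with S < k^j * a
  obtain ⟨j, hj⟩ := pow_unbounded_of_one_lt ((S:ℝ)/a) hk
  have hSj : (S:ℝ) < k ^ j * a := by
    rw [div_lt_iff₀ ha] at hj; linarith [hj]
  -- the per-step error
  set η : ENNReal := δ / (2 * ((j:ENNReal) + 1)) with hη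
  have hηpos : 0 < η := by
    refine ENNReal.div_pos hδ ?_
    exact ENNReal.mul_ne_top (by norm_num) (by simp [ENNReal.add_ne_top])
  have hηm : (0:ENNReal) < η / m := ENNReal.div_pos hηpos.ne' (by simp)
  -- choose the tightness level M₀ for the τ increment distributions
  have hinc : ∀ r : ℕ, ∃ s : ℕ, P {ω | (s:ℝ) < |X (r+1) ω - X r ω|} ≤ η / m :=
    fun r => tail_small_s5 P _ ((hXmeas (r+1)).sub (hXmeas r)) hηm
  choose sfun hsfun using hinc
  set M₀ : ℕ := (Finset.range τ).sup sfun with hM₀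
  have hM₀le : ∀ r < τ, P {ω | (M₀:ℝ) < |X (r+1) ω - X r ω|} ≤ η / m := by
    intro r hr
    refine le_trans (measure_mono ?_) (hsfun r)
    intro ω hω
    simp only [Set.mem_setOf_eq] at hω ⊢
    have : (sfun r : ℝ) ≤ (M₀:ℝ) := by
      exact_mod_cast Finset.le_sup (Finset.mem_range.mpr hr)
    linarith
  set M : ℝ := (m:ℝ) * (M₀:ℝ) with hMdef
  have hM0 : 0 ≤ M := by positivity
  refine ⟨M / a, ?_⟩
  by_contra hbad
  push_neg at hbad
  obtain ⟨n, hn1, hcontra⟩ := hbad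
  set c : ℝ := M / a with hc
  have hc0 : 0 ≤ c := by positivity
  have hac : a * c = M := by rw [hc]; field_simp
  have hbn : 0 < b n := hbpos n hn1
  have hbnm : 0 < b (n + m) := hbpos (n+m) (by omega)
  -- identical distribution facts
  have ID1 : IdentDistrib (X (n+m)) (fun ω => b (n+m) * X 1 ω) P P := by
    have := hss (n+m) (by omega) 1
    simpa using this
  have ID2 : IdentDistrib (X n) (fun ω => b n * X 1 ω) P P := by
    have := hss n hn1 1
    simpa using this
  -- key one-step inequality
  have key : ∀ t : ℝ, a ≤ t → F t ≤ F (k * t) + η := by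
    intro t hat
    have ht : 0 < t := lt_of_lt_of_le ha hat
    -- rewrite F t via X (n+m)
    have e1 : P {ω | t * b (n+m) < |X (n+m) ω|} = F t := by
      rw [scale_tail P _ _ hbnm ID1, mul_div_cancel_right₀ t hbnm.ne']
    have e2 : P {ω | k * t * b n < |X n ω|} = F (k * t) := by
      rw [scale_tail P _ _ hbn ID2, mul_div_cancel_right₀ _ hbn.ne']
    -- set inclusion
    have hsub : {ω | t * b (n+m) < |X (n+m) ω|} ⊆
        {ω | k * t * b n < |X n ω|} ∪
        ⋃ i ∈ Finset.range m, {ω | (M₀:ℝ) < |X (n+i+1) ω - X (n+i) ω|} := by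
      intro ω hω
      simp only [Set.mem_setOf_eq] at hω
      by_cases hYn : ∀ i ∈ Finset.range m, |X (n+i+1) ω - X (n+i) ω| ≤ (M₀:ℝ)
      · left
        have tele : X (n+m) ω - X n ω = ∑ i ∈ Finset.range m, (X (n+i+1) ω - X (n+i) ω) :=
          (Finset.sum_range_sub (fun i => X (n+i) ω) m).symm
        have hYb : |X (n+m) ω - X n ω| ≤ M := by
          rw [tele]
          refine le_trans (Finset.abs_sum_le_sum_abs _ _) ?_
          calc ∑ i ∈ Finset.range m, |X (n+i+1) ω - X (n+i) ω|
              ≤ ∑ i ∈ Finset.range m, (M₀:ℝ) := Finset.sum_le_sum hYn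
            _ = M := by simp [hMdef]
        have h1 : |X (n+m) ω| - M ≤ |X n ω| := by
          have := abs_sub_abs_le_abs_sub (X (n+m) ω) (X n ω)
          linarith
        have h2 : t * b (n+m) ≥ t * (k * b n + c) := by
          have := hcontra
          nlinarith
        have h3 : t * c ≥ M := by
          calc t * c ≥ a * c := by nlinarith
            _ = M := hac
        simp only [Set.mem_setOf_eq]
        nlinarith
      · right
        push_neg at hYn
        obtain ⟨i, hi, hib⟩ := hYn
        exact Set.mem_biUnion hi hib
    -- increment tails are uniformly small
    have hincr : ∀ i ∈ Finset.range m,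
        P {ω | (M₀:ℝ) < |X (n+i+1) ω - X (n+i) ω|} ≤ η / m := by
      intro i hi
      set r : ℕ := (n+i) % τ with hr
      set q : ℕ := (n+i) / τ with hq
      have hrq : r + q * τ = n + i := Nat.mod_add_div' (n+i) τ
      have hs : MeasurableSet {x : ℝ | (M₀:ℝ) < |x|} :=
        measurableSet_lt measurable_const measurable_abs
      have e := (hcsi q r).measure_mem_eq hs
      simp only [Set.preimage_setOf_eq] at e
      rw [hrq] at e
      rw [← e]
      exact hM₀le r (Nat.mod_lt _ (by omega))
    -- put it together
    calc F t = P {ω | t * b (n+m) < |X (n+m) ω|} := e1.symm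
      _ ≤ P ({ω | k * t * b n < |X n ω|} ∪
            ⋃ i ∈ Finset.range m, {ω | (M₀:ℝ) < |X (n+i+1) ω - X (n+i) ω|}) :=
          measure_mono hsub
      _ ≤ P {ω | k * t * b n < |X n ω|} +
            P (⋃ i ∈ Finset.range m, {ω | (M₀:ℝ) < |X (n+i+1) ω - X (n+i) ω|}) :=
          measure_union_le _ _
      _ ≤ F (k * t) + ∑ i ∈ Finset.range m,
            P {ω | (M₀:ℝ) < |X (n+i+1) ω - X (n+i) ω|} := by
          rw [e2]; exact add_le_add_right (measure_biUnion_finset_le _ _) _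
      _ ≤ F (k * t) + η := by
          refine add_le_add_right ?_ _
          calc ∑ i ∈ Finset.range m, P {ω | (M₀:ℝ) < |X (n+i+1) ω - X (n+i) ω|}
              ≤ ∑ _i ∈ Finset.range m, η / m := Finset.sum_le_sum hincr
            _ = (m:ENNReal) * (η / m) := by simp [Finset.sum_const, mul_comm]
            _ ≤ η := ENNReal.mul_div_le
  -- iterate
  have iter : ∀ i : ℕ, F a ≤ F (k ^ i * a) + i * η := by
    intro i
    induction i with
    | zero => simp
    | succ i ih =>
      push_cast
      have hki : a ≤ k ^ i * a := le_mul_of_one_le_left ha.le (one_le_pow₀ hk.le)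
      calc F a ≤ F (k ^ i * a) + i * η := ih
        _ ≤ (F (k * (k ^ i * a)) + η) + i * η := add_le_add_left (key _ hki) _
        _ = F (k ^ (i+1) * a) + ((i:ENNReal)+1) * η := by
            rw [← mul_assoc, ← pow_succ']
            ring
  -- conclude
  have hmono : F (k ^ j * a) ≤ δ / 4 := by
    refine le_trans (measure_mono ?_) hS
    intro ω hω
    simp only [Set.mem_setOf_eq] at hω ⊢
    linarith
  have hfinal : δ ≤ δ / 4 + (j:ENNReal) * η := le_trans (iter j) (add_le_add_left hmono _)
  -- pass to real numbers
  have hηtop : η ≠ ⊤ := (ENNReal.div_lt_top hδtop (mul_ne_zero (by norm_num) (by simp))).ne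
  have hRtop : δ / 4 + (j:ENNReal) * η ≠ ⊤ := by
    refine ENNReal.add_ne_top.mpr ⟨?_, ?_⟩
    · exact (ENNReal.div_lt_top hδtop (by norm_num)).ne
    · exact ENNReal.mul_ne_top (by simp) hηtop
  have hreal := ENNReal.toReal_mono hRtop hfinal
  rw [ENNReal.toReal_add (ENNReal.div_lt_top hδtop (by norm_num)).ne
      (ENNReal.mul_ne_top (by simp) hηtop), ENNReal.toReal_div, ENNReal.toReal_mul,
      hη, ENNReal.toReal_div, ENNReal.toReal_mul,
      ENNReal.toReal_add (by simp) (by simp), ENNReal.toReal_one] at hreal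
  simp only [ENNReal.toReal_ofNat, ENNReal.toReal_natCast] at hreal
  have hd : 0 < δ.toReal := ENNReal.toReal_pos hδ hδtop
  have hj1 : (0:ℝ) < (j:ℝ) + 1 := by positivity
  have hd2 : (j:ℝ) * (δ.toReal / (2 * ((j:ℝ) + 1))) < δ.toReal / 2 := by
    rw [← mul_div_assoc, div_lt_div_iff₀ (by positivity) (by norm_num : (0:ℝ) < 2)]
    nlinarith
  nlinarith
end
end

section
/- Let τ ∈ ℕ and let X = (X_n)_{n∈ℕ₀} be a discrete-time stochastic process that is marginally self-similar with scaling function b : ℕ → (0,∞) and has marginally cyclostationary increments with period τ, and assume P(X₁ = 0) < 1 and that b is not identically 1 on ℕ. Then for every m ∈ ℕ there exists d > 0 such that max(b(nτ), b(nτ+m)) ≥ d for all n ∈ ℕ. -/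
open MeasureTheory ProbabilityTheory Filter
open scoped ENNReal

noncomputable section

namespace Stmt6Aux

variable {Ω : Type*} [MeasurableSpace Ω]

/-- tail probability `P(|Y| > t)` -/
def tl (P : Measure Ω) (Y : Ω → ℝ) (t : ℝ) : ℝ≥0∞ := P {ω | t < |Y ω|}

lemma tl_anti (P : Measure Ω) (Y : Ω → ℝ) {s t : ℝ} (h : s ≤ t) :
    tl P Y t ≤ tl P Y s :=
  measure_mono (fun ω hω => lt_of_le_of_lt h hω)

lemma tl_eq_of_ident {P : Measure Ω} {Y Z : Ω → ℝ} (h : IdentDistrib Y Z P P) (t : ℝ) :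
    tl P Y t = tl P Z t := by
  have hs : MeasurableSet {x : ℝ | t < |x|} :=
    (isOpen_lt continuous_const continuous_abs).measurableSet
  simpa [tl, Set.preimage] using h.measure_mem_eq hs

lemma tl_scale (P : Measure Ω) (Y : Ω → ℝ) {c : ℝ} (hc : 0 < c) (t : ℝ) :
    tl P (fun ω => c * Y ω) t = tl P Y (t / c) := by
  unfold tl
  congr 1
  ext ω
  simp only [Set.mem_setOf_eq, abs_mul, abs_of_pos hc]
  rw [div_lt_iff₀ hc, mul_comm]

/-- tails vanish at infinity -/
lemma tl_vanish (P : Measure Ω) [IsProbabilityMeasure P] {Y : Ω → ℝ} (hY : Measurable Y)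
    {η : ℝ≥0∞} (hη : 0 < η) : ∃ K : ℕ, tl P Y K < η := by
  set s : ℕ → Set Ω := fun n => {ω | (n : ℝ) < |Y ω|} with hs
  have hmeas : ∀ n : ℕ, NullMeasurableSet (s n) P := by
    intro n
    exact ((measurableSet_lt measurable_const hY.abs)).nullMeasurableSet
  have hanti : Antitone s := by
    intro a b hab ω hω
    simp only [hs, Set.mem_setOf_eq] at hω ⊢
    exact lt_of_le_of_lt (by exact_mod_cast hab) hω
  have hfin : ∃ n : ℕ, P (s n) ≠ ∞ := ⟨0, measure_ne_top _ _⟩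
  have hinter : ⋂ n, s n = ∅ := by
    ext ω
    simp only [Set.mem_iInter, Set.mem_empty_iff_false, iff_false, not_forall]
    obtain ⟨n, hn⟩ := exists_nat_gt |Y ω|
    exact ⟨n, by simp [hs, not_lt.2 hn.le]⟩
  have htend := MeasureTheory.tendsto_measure_iInter_atTop hmeas hanti hfin
  rw [hinter, measure_empty] at htend
  have := (htend.eventually (eventually_lt_nhds hη)).exists
  obtain ⟨K, hK⟩ := this
  exact ⟨K, hK⟩

/-- if `Y` is not a.s. zero then some tail is positive -/
lemma tl_pos (P : Measure Ω) [IsProbabilityMeasure P] {Y : Ω → ℝ} (hY : Measurable Y)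
    (h : P {ω | Y ω = 0} < 1) : ∃ t : ℝ, 0 < t ∧ 0 < tl P Y t := by
  by_contra hcon
  push_neg at hcon
  have hz : ∀ n : ℕ, P {ω | (1 / (n + 1) : ℝ) < |Y ω|} = 0 := by
    intro n
    have h1 : (0:ℝ) < 1 / (n + 1) := by positivity
    have := hcon _ h1
    exact le_antisymm this zero_le
  have hsub : {ω | Y ω ≠ 0} ⊆ ⋃ n : ℕ, {ω | (1 / (n + 1) : ℝ) < |Y ω|} := by
    intro ω hω
    have habs : 0 < |Y ω| := abs_pos.mpr hω
    obtain ⟨n, hn⟩ := exists_nat_gt (1 / |Y ω|)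
    refine Set.mem_iUnion.2 ⟨n, ?_⟩
    have hn' : 1 / |Y ω| < n + 1 := lt_of_lt_of_le hn (by exact_mod_cast Nat.le_succ n)
    simp only [Set.mem_setOf_eq]
    rw [div_lt_iff₀ (by positivity)]
    rw [div_lt_iff₀ habs] at hn'
    linarith [hn']
  have hnull : P {ω | Y ω ≠ 0} = 0 := by
    refine measure_mono_null hsub ?_
    exact (measure_iUnion_null_iff).2 hz
  have hcompl : {ω | Y ω = 0} = {ω | Y ω ≠ 0}ᶜ := by ext ω; simp
  have hmeas0 : MeasurableSet {ω | Y ω ≠ 0} := (hY (measurableSet_singleton 0)).compl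
  rw [hcompl, prob_compl_eq_one_sub hmeas0, hnull] at h
  simp at h

/-- if all tails vanish then the variable is a.s. zero -/
lemma null_of_tl_zero (P : Measure Ω) (Y : Ω → ℝ) (h : ∀ t : ℝ, 0 < t → tl P Y t = 0) :
    P {ω | Y ω ≠ 0} = 0 := by
  have hsub : {ω | Y ω ≠ 0} ⊆ ⋃ n : ℕ, {ω | (1 / (n + 1) : ℝ) < |Y ω|} := by
    intro ω hω
    have habs : 0 < |Y ω| := abs_pos.mpr hω
    obtain ⟨k, hk⟩ := exists_nat_gt (1 / |Y ω|)
    refine Set.mem_iUnion.2 ⟨k, ?_⟩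
    simp only [Set.mem_setOf_eq]
    rw [div_lt_iff₀ habs] at hk
    have hk' : 1 < |Y ω| * (k + 1) := by nlinarith [abs_nonneg (Y ω)]
    rw [div_lt_iff₀ (by positivity)]
    linarith
  refine measure_mono_null hsub ?_
  exact (measure_iUnion_null_iff).2 (fun k => h _ (by positivity))

/-- uniqueness of scaling: if `a•Y` and `c•Y` are identically distributed with `Y` not a.s. `0`,
then `a = c`. -/
lemma scale_unique (P : Measure Ω) [IsProbabilityMeasure P] {Y : Ω → ℝ} (hY : Measurable Y)
    (hpos : ∃ t : ℝ, 0 < t ∧ 0 < tl P Y t) {a c : ℝ} (ha : 0 < a) (hc : 0 < c)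
    (h : IdentDistrib (fun ω => a * Y ω) (fun ω => c * Y ω) P P) : a = c := by
  -- main step : if a < c, contradiction
  have key : ∀ a c : ℝ, 0 < a → 0 < c → a < c →
      IdentDistrib (fun ω => a * Y ω) (fun ω => c * Y ω) P P → False := by
    intro a c ha hc hac h
    obtain ⟨t₀, ht₀, hpos₀⟩ := hpos
    set ρ : ℝ := c / a with hρ
    have hρ1 : 1 < ρ := (one_lt_div ha).2 hac
    -- tl P Y (s * ρ) = tl P Y s for all s
    have hstep : ∀ s : ℝ, tl P Y (s * ρ) = tl P Y s := by
      intro s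
      have h1 : tl P Y ((s * c) / a) = tl P Y ((s * c) / c) := by
        rw [← tl_scale P Y ha, ← tl_scale P Y hc]
        exact tl_eq_of_ident h _
      have e1 : (s * c) / a = s * ρ := by rw [hρ, mul_div_assoc]
      have e2 : (s * c) / c = s := by field_simp
      rw [e1, e2] at h1
      exact h1
    have hiter : ∀ k : ℕ, tl P Y (t₀ * ρ ^ k) = tl P Y t₀ := by
      intro k
      induction k with
      | zero => simp
      | succ k ih =>
        have : t₀ * ρ ^ (k + 1) = (t₀ * ρ ^ k) * ρ := by ring
        rw [this, hstep, ih]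
    obtain ⟨K, hK⟩ := tl_vanish P hY hpos₀
    obtain ⟨k, hk⟩ := pow_unbounded_of_one_lt ((K : ℝ) / t₀) hρ1
    have hge : (K : ℝ) ≤ t₀ * ρ ^ k := by
      rw [div_lt_iff₀ ht₀] at hk
      nlinarith
    have : tl P Y (t₀ * ρ ^ k) ≤ tl P Y K := tl_anti P Y hge
    rw [hiter k] at this
    exact absurd (lt_of_le_of_lt this hK) (lt_irrefl _)
  rcases lt_trichotomy a c with hlt | heq | hgt
  · exact absurd (key a c ha hc hlt h) (fun x => x)
  · exact heq
  · exact absurd (key c a hc ha hgt h.symm) (fun x => x)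

lemma ennreal_mul_div_cancel (η : ℝ≥0∞) (n : ℕ) :
    ((n:ℝ≥0∞) + 1) * (η / (2 * ((n:ℝ≥0∞) + 1))) = η / 2 := by
  set m : ℝ≥0∞ := (n:ℝ≥0∞) + 1 with hm
  have h0 : m ≠ 0 := by simp [hm]
  have htop : m ≠ ⊤ := by
    simp only [hm]
    exact ENNReal.add_ne_top.2 ⟨ENNReal.natCast_ne_top n, ENNReal.one_ne_top⟩
  rw [div_eq_mul_inv, div_eq_mul_inv, ENNReal.mul_inv (Or.inl (by norm_num)) (Or.inl (by norm_num))]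
  calc m * (η * (2⁻¹ * m⁻¹)) = (η * 2⁻¹) * (m * m⁻¹) := by ring
  _ = η * 2⁻¹ := by rw [ENNReal.mul_inv_cancel h0 htop, mul_one]

end Stmt6Aux

namespace Stmt6Aux

/-- modular inverse: bounded `x ≥ 1` with `n ∣ x * a + 1`, for `a` coprime to `n`. -/
lemma exists_bounded_inverse (a n : ℕ) (hn : 1 ≤ n) (hco : Nat.Coprime a n) :
    ∃ x : ℕ, 1 ≤ x ∧ x ≤ 2 * n ∧ n ∣ x * a + 1 := by
  have htot : 1 ≤ n.totient := (Nat.totient_pos).2 hn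
  set x₀ : ℕ := ((n - 1) * a ^ (n.totient - 1)) % n with hx₀
  have hx₀lt : x₀ < n := Nat.mod_lt _ (by omega)
  refine ⟨x₀ + n, by omega, by omega, ?_⟩
  have h0 : x₀ ≡ (n - 1) * a ^ (n.totient - 1) [MOD n] := Nat.mod_modEq _ n
  have hpow : a ^ (n.totient - 1) * a = a ^ n.totient := by
    rw [← pow_succ]; congr 1; omega
  have key : (x₀ + n) * a + 1 ≡ 0 [MOD n] := by
    calc (x₀ + n) * a + 1
        ≡ ((n - 1) * a ^ (n.totient - 1) + n) * a + 1 [MOD n] :=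
          ((h0.add_right n).mul_right a).add_right 1
      _ = (n - 1) * a ^ n.totient + (n * a + 1) := by rw [← hpow]; ring
      _ ≡ (n - 1) * 1 + (n * a + 1) [MOD n] :=
          ((Nat.ModEq.pow_totient hco).mul_left (n - 1)).add_right _
      _ = n * a + n := by omega
      _ ≡ 0 [MOD n] := (Nat.modEq_zero_iff_dvd).2 ⟨a + 1, by ring⟩
  exact (Nat.modEq_zero_iff_dvd).1 key

/-- there is a multiple of τ among any τ consecutive integers starting at R -/
lemma exists_multiple_in_range (R τ : ℕ) (hτ : 1 ≤ τ) (hR : 1 ≤ R) :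
    ∃ k : ℕ, k + 1 ≤ τ ∧ (R + k) % τ = 0 := by
  rcases Nat.eq_zero_or_pos (R % τ) with h | h
  · exact ⟨0, hτ, by simpa using h⟩
  · have hlt : R % τ < τ := Nat.mod_lt _ (by omega)
    refine ⟨τ - R % τ, by omega, ?_⟩
    have e : R + (τ - R % τ) = (R % τ + (τ - R % τ)) + (R / τ) * τ := by
      have := Nat.mod_add_div' R τ; omega
    rw [e, Nat.add_mul_mod_self_right]
    have : R % τ + (τ - R % τ) = τ := by omega
    rw [this, Nat.mod_self]

end Stmt6Aux

namespace Stmt6Aux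

/-- uniform bounds for `b` on an initial range -/
lemma range_bounds (b : ℕ → ℝ) (hbpos : ∀ n : ℕ, 1 ≤ n → 0 < b n) (L : ℕ) :
    ∃ Bl Bu : ℝ, 0 < Bl ∧ Bl ≤ 1 ∧ 1 ≤ Bu ∧ ∀ i, 1 ≤ i → i ≤ L → Bl ≤ b i ∧ b i ≤ Bu := by
  induction L with
  | zero => exact ⟨1, 1, one_pos, le_rfl, le_rfl, fun i h1 h2 => absurd (le_trans h1 h2) (by omega)⟩
  | succ L ih =>
    obtain ⟨Bl, Bu, hBl0, hBl1, hBu1, hb⟩ := ih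
    refine ⟨min Bl (b (L+1)), max Bu (b (L+1)), lt_min hBl0 (hbpos (L+1) (by omega)),
      le_trans (min_le_left _ _) hBl1, le_trans hBu1 (le_max_left _ _), ?_⟩
    intro i h1 h2
    rcases Nat.lt_succ_iff_lt_or_eq.1 (Nat.lt_succ_of_le h2) with h | h
    · obtain ⟨ha, hb'⟩ := hb i h1 (by omega)
      exact ⟨le_trans (min_le_left _ _) ha, le_trans hb' (le_max_left _ _)⟩
    · subst h
      exact ⟨min_le_right _ _, le_max_right _ _⟩

end Stmt6Aux

open Stmt6Aux in
set_option maxHeartbeats 1000000 in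
/-- Corollary 2.4: if the scaling function is not identically one, then along each
residue class `max (b (nτ)) (b (nτ+m))` is bounded below away from zero. -/
theorem stmt6 {Ω : Type*} [MeasurableSpace Ω] (P : Measure Ω) [IsProbabilityMeasure P]
    (X : ℕ → Ω → ℝ) (hXmeas : ∀ n, Measurable (X n))
    (b : ℕ → ℝ) (hbpos : ∀ n : ℕ, 1 ≤ n → 0 < b n) (τ : ℕ) (hτ : 1 ≤ τ)
    (hss : ∀ (n : ℕ), 1 ≤ n → ∀ (m : ℕ),
      IdentDistrib (X (n * m)) (fun ω => b n * X m ω) P P)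
    (hcsi : ∀ k m : ℕ, IdentDistrib (fun ω => X (m + 1) ω - X m ω)
      (fun ω => X (m + k * τ + 1) ω - X (m + k * τ) ω) P P)
    (hnd : P {ω | X 1 ω = 0} < 1)
    (hb1 : ¬ ∀ n : ℕ, 1 ≤ n → b n = 1) :
    ∀ m : ℕ, 1 ≤ m → ∃ d : ℝ, 0 < d ∧ ∀ n : ℕ, 1 ≤ n →
      d ≤ max (b (n * τ)) (b (n * τ + m)) := by
  classical
  -- increments
  set D : ℕ → Ω → ℝ := fun p ω => X (p+1) ω - X p ω with hDdef
  have hDmeas : ∀ p, Measurable (D p) := fun p => (hXmeas (p+1)).sub (hXmeas p)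
  have h1X : Measurable (X 1) := hXmeas 1
  have hpos1 : ∃ t : ℝ, 0 < t ∧ 0 < tl P (X 1) t := tl_pos P h1X hnd
  -- uniqueness of scale
  have uniq : ∀ a c : ℝ, 0 < a → 0 < c →
      IdentDistrib (fun ω => a * X 1 ω) (fun ω => c * X 1 ω) P P → a = c :=
    fun a c ha hc h => scale_unique P h1X hpos1 ha hc h
  -- one-dimensional law of X p
  have blaw : ∀ p : ℕ, 1 ≤ p → IdentDistrib (X p) (fun ω => b p * X 1 ω) P P := by
    intro p hp
    have := hss p hp 1
    rwa [mul_one] at this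
  -- multiplicativity
  have bmul : ∀ x y : ℕ, 1 ≤ x → 1 ≤ y → b (x * y) = b x * b y := by
    intro x y hx hy
    have hxy : 1 ≤ x * y := Nat.one_le_iff_ne_zero.2 (Nat.mul_ne_zero (by omega) (by omega))
    have h1 := blaw (x * y) hxy
    have h2 := hss x hx y
    have h3 := (blaw y hy).comp (measurable_id.const_mul (b x))
    have chain : IdentDistrib (fun ω => b (x*y) * X 1 ω) (fun ω => (b x * b y) * X 1 ω) P P := by
      have c1 := (h1.symm.trans h2).trans h3
      simpa [Function.comp_def, mul_assoc] using c1
    exact uniq _ _ (hbpos _ hxy) (mul_pos (hbpos x hx) (hbpos y hy)) chain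
  -- increment laws depend only on the residue
  have Dlaw : ∀ p : ℕ, IdentDistrib (D p) (D (p % τ)) P P := by
    intro p
    have h := hcsi (p / τ) (p % τ)
    rw [Nat.mod_add_div'] at h
    exact h.symm
  -- tails of X q
  have tlX : ∀ q : ℕ, 1 ≤ q → ∀ s : ℝ, tl P (X q) s = tl P (X 1) (s / b q) := by
    intro q hq s
    rw [tl_eq_of_ident (blaw q hq), tl_scale P (X 1) (hbpos q hq)]
  -- pair lemma at an "active" residue
  have strong_at : ∀ r : ℕ, ∀ t : ℝ, 0 < t → 0 < tl P (D r) t →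
      ∃ ε : ℝ, 0 < ε ∧ ∀ p, 1 ≤ p → p % τ = r → ¬(b p < ε ∧ b (p+1) < ε) := by
    intro r t ht hpos
    set η := tl P (D r) t with hηdef
    have hηtop : η ≠ ∞ := (prob_le_one.trans_lt ENNReal.one_lt_top).ne
    have hη0 : η ≠ 0 := ne_of_gt hpos
    have hhalf : (0:ℝ≥0∞) < η / 2 := ENNReal.div_pos hη0 (by norm_num)
    obtain ⟨K, hK⟩ := tl_vanish P h1X hhalf
    set k₀ : ℕ := max K 1 with hk₀def
    have hk₀1 : 1 ≤ k₀ := le_max_right _ _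
    have hk₀ : tl P (X 1) k₀ < η / 2 :=
      lt_of_le_of_lt (tl_anti P (X 1) (by exact_mod_cast le_max_left K 1)) hK
    refine ⟨t / (2 * k₀), by positivity, ?_⟩
    rintro p hp hpr ⟨hs1, hs2⟩
    have hDp : tl P (D p) t = η := by rw [tl_eq_of_ident (Dlaw p), hpr]
    have hsub : {ω | t < |D p ω|} ⊆ {ω | t/2 < |X (p+1) ω|} ∪ {ω | t/2 < |X p ω|} := by
      intro ω hω
      simp only [Set.mem_setOf_eq, Set.mem_union] at hω ⊢
      by_contra hcon
      push_neg at hcon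
      obtain ⟨hc1, hc2⟩ := hcon
      have hDval : D p ω = X (p+1) ω - X p ω := rfl
      have habs : |D p ω| ≤ t := by
        rw [hDval]
        calc |X (p+1) ω - X p ω| = |X (p+1) ω + -(X p ω)| := by rw [sub_eq_add_neg]
        _ ≤ |X (p+1) ω| + |-(X p ω)| := abs_add_le _ _
        _ = |X (p+1) ω| + |X p ω| := by rw [abs_neg]
        _ ≤ t/2 + t/2 := add_le_add hc1 hc2
        _ = t := by ring
      linarith
    have hterm : ∀ q : ℕ, 1 ≤ q → b q < t / (2*k₀) → tl P (X q) (t/2) < η/2 := by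
      intro q hq hbq
      rw [tlX q hq]
      refine lt_of_le_of_lt (tl_anti P (X 1) ?_) hk₀
      rw [le_div_iff₀ (hbpos q hq)]
      have hk₀R : (1:ℝ) ≤ (k₀:ℝ) := by exact_mod_cast hk₀1
      rw [lt_div_iff₀ (by positivity : (0:ℝ) < 2*k₀)] at hbq
      nlinarith [hbpos q hq]
    have hub : η ≤ tl P (X (p+1)) (t/2) + tl P (X p) (t/2) := by
      rw [← hDp]
      exact le_trans (measure_mono hsub) (measure_union_le _ _)
    have hlt : tl P (X (p+1)) (t/2) + tl P (X p) (t/2) < η := by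
      calc tl P (X (p+1)) (t/2) + tl P (X p) (t/2) < η/2 + η/2 :=
        ENNReal.add_lt_add (hterm (p+1) (by omega) hs2) (hterm p hp hs1)
      _ = η := ENNReal.add_halves η
    exact absurd (lt_of_le_of_lt hub hlt) (lt_irrefl η)
  -- equality at a "flat" residue
  have ae_of_flat : ∀ p : ℕ, (∀ t : ℝ, 0 < t → tl P (D p) t = 0) → X (p+1) =ᵐ[P] X p := by
    intro p hDp0
    have hnull : P {ω | D p ω ≠ 0} = 0 := null_of_tl_zero P (D p) hDp0
    have hset : {ω | ¬ X (p+1) ω = X p ω} = {ω | D p ω ≠ 0} := by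
      ext ω
      simp only [Set.mem_setOf_eq, hDdef]
      rw [sub_ne_zero]
    exact ae_iff.2 (by rw [hset]; exact hnull)
  have flat_eq : ∀ r : ℕ, (∀ t : ℝ, 0 < t → tl P (D r) t = 0) →
      ∀ p, 1 ≤ p → p % τ = r → b (p + 1) = b p := by
    intro r hflat p hp hpr
    have hDp0 : ∀ t : ℝ, 0 < t → tl P (D p) t = 0 := by
      intro t ht
      rw [tl_eq_of_ident (Dlaw p), hpr]
      exact hflat t ht
    have hae := ae_of_flat p hDp0
    have hident : IdentDistrib (X (p+1)) (X p) P P :=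
      IdentDistrib.of_ae_eq (hXmeas (p+1)).aemeasurable hae
    have chain : IdentDistrib (fun ω => b (p+1) * X 1 ω) (fun ω => b p * X 1 ω) P P :=
      (blaw (p+1) (by omega)).symm.trans (hident.trans (blaw p hp))
    exact uniq _ _ (hbpos _ (by omega)) (hbpos p hp) chain
  -- residue 0 cannot be flat
  have flat0 : (∀ t : ℝ, 0 < t → tl P (D 0) t = 0) → False := by
    intro hflat
    have hae : X 1 =ᵐ[P] X 0 := ae_of_flat 0 hflat
    have h01 : IdentDistrib (X 0) (X 1) P P :=
      (IdentDistrib.of_ae_eq (hXmeas 1).aemeasurable hae).symm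
    have hall : ∀ n, 1 ≤ n → b n = 1 := by
      intro n hn
      have h' := hss n hn 0
      rw [Nat.mul_zero] at h'
      have c1 : IdentDistrib (X 1) (fun ω => b n * X 1 ω) P P :=
        h01.symm.trans (h'.trans (h01.comp (measurable_id.const_mul (b n))))
      have h'' : IdentDistrib (fun ω => 1 * X 1 ω) (fun ω => b n * X 1 ω) P P := by
        simpa [one_mul] using c1
      exact (uniq 1 (b n) one_pos (hbpos n hn) h'').symm
    exact hb1 hall
  -- master constants
  have exists_eps : ∃ ε : ℝ, 0 < ε ∧ ε ≤ 1 ∧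
      (∀ p : ℕ, 1 ≤ p → b p < ε → b (p+1) < ε → b (p+1) = b p) ∧
      (∀ p : ℕ, 1 ≤ p → p % τ = 0 → ¬(b p < ε ∧ b (p+1) < ε)) := by
    have perres : ∀ r : ℕ, ∃ ε : ℝ, 0 < ε ∧
        ∀ p, 1 ≤ p → p % τ = r → b p < ε → b (p+1) < ε → b (p+1) = b p := by
      intro r
      by_cases hcase : ∃ t : ℝ, 0 < t ∧ 0 < tl P (D r) t
      · obtain ⟨t, ht, hp⟩ := hcase
        obtain ⟨ε, hε, hstrong⟩ := strong_at r t ht hp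
        exact ⟨ε, hε, fun p hp' hpr h1 h2 => absurd ⟨h1, h2⟩ (hstrong p hp' hpr)⟩
      · push_neg at hcase
        have hflat : ∀ t : ℝ, 0 < t → tl P (D r) t = 0 :=
          fun t ht => le_antisymm (hcase t ht) zero_le
        exact ⟨1, one_pos, fun p hp' hpr _ _ => flat_eq r hflat p hp' hpr⟩
    have minind : ∀ k : ℕ, ∃ ε : ℝ, 0 < ε ∧ ∀ r, r < k → ∀ p, 1 ≤ p → p % τ = r →
        b p < ε → b (p+1) < ε → b (p+1) = b p := by
      intro k
      induction k with
      | zero => exact ⟨1, one_pos, fun r hr => absurd hr (Nat.not_lt_zero r)⟩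
      | succ k ih =>
        obtain ⟨ε₁, hε₁, h₁⟩ := ih
        obtain ⟨ε₂, hε₂, h₂⟩ := perres k
        refine ⟨min ε₁ ε₂, lt_min hε₁ hε₂, ?_⟩
        intro r hr p hp' hpr hb1' hb2'
        rcases Nat.lt_succ_iff_lt_or_eq.1 hr with h | h
        · exact h₁ r h p hp' hpr (lt_of_lt_of_le hb1' (min_le_left _ _))
            (lt_of_lt_of_le hb2' (min_le_left _ _))
        · subst h
          exact h₂ p hp' hpr (lt_of_lt_of_le hb1' (min_le_right _ _))
            (lt_of_lt_of_le hb2' (min_le_right _ _))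
    obtain ⟨ε₁, hε₁0, hML'⟩ := minind τ
    have hstrong0 : ∃ ε : ℝ, 0 < ε ∧ ∀ p, 1 ≤ p → p % τ = 0 →
        ¬(b p < ε ∧ b (p+1) < ε) := by
      by_cases hcase : ∃ t : ℝ, 0 < t ∧ 0 < tl P (D 0) t
      · obtain ⟨t, ht, hp⟩ := hcase
        exact strong_at 0 t ht hp
      · push_neg at hcase
        exact (flat0 (fun t ht => le_antisymm (hcase t ht) zero_le)).elim
    obtain ⟨ε₂, hε₂0, hP0'⟩ := hstrong0
    have hle1 : min (min ε₁ ε₂) 1 ≤ ε₁ := le_trans (min_le_left _ _) (min_le_left _ _)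
    have hle2 : min (min ε₁ ε₂) 1 ≤ ε₂ := le_trans (min_le_left _ _) (min_le_right _ _)
    refine ⟨min (min ε₁ ε₂) 1, lt_min (lt_min hε₁0 hε₂0) one_pos, min_le_right _ _, ?_, ?_⟩
    · intro p hp' h1 h2
      exact hML' (p % τ) (Nat.mod_lt _ (by omega)) p hp' rfl
        (lt_of_lt_of_le h1 hle1) (lt_of_lt_of_le h2 hle1)
    · rintro p hp' hpr ⟨h1, h2⟩
      exact hP0' p hp' hpr ⟨lt_of_lt_of_le h1 hle2, lt_of_lt_of_le h2 hle2⟩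
  -- forward-shift control
  have shift_bound : ∃ C : ℝ, 1 ≤ C ∧ ∀ A r : ℕ, 1 ≤ A → r ≤ τ + 2 → b A ≤ 1 →
      b (A + r) ≤ C := by
    obtain ⟨t₀, ht₀, hη⟩ := hpos1
    set η := tl P (X 1) t₀ with hηdef
    set J : ℕ := τ + 2 with hJdef
    have hηtop : η ≠ ∞ := (prob_le_one.trans_lt ENNReal.one_lt_top).ne
    have hη0 : η ≠ 0 := ne_of_gt hη
    set κ : ℝ≥0∞ := η / (2 * ((J:ℝ≥0∞) + 1)) with hκdef
    have hκ0 : 0 < κ := by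
      refine ENNReal.div_pos hη0 ?_
      exact ENNReal.mul_ne_top (by norm_num)
        (ENNReal.add_ne_top.2 ⟨ENNReal.natCast_ne_top J, ENNReal.one_ne_top⟩)
    have hchoose : ∀ k : ℕ, ∃ K : ℕ, tl P (X 1) K < κ ∧ ∀ j, j < k → tl P (D j) K < κ := by
      intro k
      induction k with
      | zero =>
        obtain ⟨K, hK⟩ := tl_vanish P h1X hκ0
        exact ⟨K, hK, fun j hj => absurd hj (Nat.not_lt_zero j)⟩
      | succ k ih =>
        obtain ⟨K₁, hK₁, hjs⟩ := ih
        obtain ⟨K₂, hK₂⟩ := tl_vanish P (hDmeas k) hκ0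
        refine ⟨max K₁ K₂,
          lt_of_le_of_lt (tl_anti _ _ (by exact_mod_cast le_max_left K₁ K₂)) hK₁, ?_⟩
        intro j hj
        rcases Nat.lt_succ_iff_lt_or_eq.1 hj with h | h
        · exact lt_of_le_of_lt (tl_anti _ _ (by exact_mod_cast le_max_left K₁ K₂)) (hjs j h)
        · subst h
          exact lt_of_le_of_lt (tl_anti _ _ (by exact_mod_cast le_max_right K₁ K₂)) hK₂
    obtain ⟨K, hKX, hKD⟩ := hchoose τ
    have tele : ∀ A : ℕ, 1 ≤ A → b A ≤ 1 → ∀ r : ℕ, r ≤ J →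
        tl P (X (A + r)) (((r:ℝ) + 1) * (K:ℝ)) ≤ ((r:ℝ≥0∞) + 1) * κ := by
      intro A hA hbA r
      induction r with
      | zero =>
        intro _
        simp only [Nat.cast_zero, zero_add, one_mul, Nat.add_zero]
        rw [tlX A hA]
        refine le_trans (tl_anti P (X 1) ?_) (le_of_lt hKX)
        rw [le_div_iff₀ (hbpos A hA)]
        nlinarith [Nat.cast_nonneg (α := ℝ) K, hbpos A hA]
      | succ r ih =>
        intro hr
        have hr' : r ≤ J := by omega
        have hstep := ih hr'
        have hD' : tl P (D (A+r)) K < κ := by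
          rw [tl_eq_of_ident (Dlaw (A+r))]
          exact hKD _ (Nat.mod_lt _ (by omega))
        have hsub : {ω | ((r:ℝ) + 1 + 1) * (K:ℝ) < |X (A + (r+1)) ω|} ⊆
            {ω | ((r:ℝ) + 1) * (K:ℝ) < |X (A + r) ω|} ∪ {ω | (K:ℝ) < |D (A + r) ω|} := by
          intro ω hω
          simp only [Set.mem_setOf_eq, Set.mem_union] at hω ⊢
          by_contra hcon
          push_neg at hcon
          obtain ⟨hc1, hc2⟩ := hcon
          have hidx : A + (r+1) = (A + r) + 1 := by omega
          have hXval : X (A + (r+1)) ω = X (A + r) ω + D (A + r) ω := by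
            rw [hidx]
            simp only [hDdef]
            ring
          have habs : |X (A + (r+1)) ω| ≤ ((r:ℝ) + 1 + 1) * (K:ℝ) := by
            rw [hXval]
            calc |X (A + r) ω + D (A + r) ω| ≤ |X (A + r) ω| + |D (A + r) ω| := abs_add_le _ _
            _ ≤ ((r:ℝ) + 1) * (K:ℝ) + (K:ℝ) := add_le_add hc1 hc2
            _ = ((r:ℝ) + 1 + 1) * (K:ℝ) := by ring
          linarith
        have hgoalcast : (((r+1:ℕ):ℝ) + 1) * (K:ℝ) = ((r:ℝ) + 1 + 1) * (K:ℝ) := by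
          push_cast; ring
        have hgoalcast2 : (((r+1:ℕ):ℝ≥0∞) + 1) * κ = (((r:ℝ≥0∞) + 1) * κ) + κ := by
          push_cast; ring
        rw [hgoalcast, hgoalcast2]
        calc tl P (X (A + (r+1))) (((r:ℝ) + 1 + 1) * (K:ℝ))
            ≤ tl P (X (A + r)) (((r:ℝ) + 1) * (K:ℝ)) + tl P (D (A + r)) (K:ℝ) :=
              le_trans (measure_mono hsub) (measure_union_le _ _)
        _ ≤ (((r:ℝ≥0∞) + 1) * κ) + κ := add_le_add hstep (le_of_lt hD')
    refine ⟨max (((J:ℝ) + 1) * (K:ℝ) / t₀) 1, le_max_right _ _, ?_⟩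
    intro A r hA hr hbA
    by_contra hcon
    push_neg at hcon
    have hAR1 : 1 ≤ A + r := by omega
    have harg : ((r:ℝ) + 1) * (K:ℝ) / b (A+r) ≤ t₀ := by
      have hbig : ((J:ℝ) + 1) * (K:ℝ) / t₀ < b (A+r) := lt_of_le_of_lt (le_max_left _ _) hcon
      rw [div_lt_iff₀ ht₀] at hbig
      rw [div_le_iff₀ (hbpos _ hAR1)]
      have hrJ : ((r:ℝ) + 1) ≤ ((J:ℝ) + 1) := by
        have : (r:ℝ) ≤ (J:ℝ) := by exact_mod_cast hr
        linarith
      nlinarith [Nat.cast_nonneg (α := ℝ) K, hbpos _ hAR1, ht₀]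
    have hlow : η ≤ tl P (X (A+r)) (((r:ℝ) + 1) * (K:ℝ)) := by
      rw [tlX (A+r) hAR1]
      exact tl_anti P (X 1) harg
    have hup : tl P (X (A+r)) (((r:ℝ) + 1) * (K:ℝ)) < η := by
      refine lt_of_le_of_lt (tele A hA hbA r hr) ?_
      calc ((r:ℝ≥0∞) + 1) * κ ≤ ((J:ℝ≥0∞) + 1) * κ := by
            apply mul_le_mul_left
            exact add_le_add_left (by exact_mod_cast hr) 1
      _ = η / 2 := ennreal_mul_div_cancel η J
      _ < η := ENNReal.half_lt_self hη0 hηtop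
    exact absurd (lt_of_le_of_lt hlow hup) (lt_irrefl η)
  -- ===== main argument =====
  intro m hm
  obtain ⟨ε, hε0, hε1, hML, hP0⟩ := exists_eps
  obtain ⟨C, hC1, hPL2⟩ := shift_bound
  obtain ⟨B, U, hB0, hB1, hU1, hBU⟩ := range_bounds b hbpos (2*m+2)
  have hC0 : (0:ℝ) < C := lt_of_lt_of_le one_pos hC1
  have hU0 : (0:ℝ) < U := lt_of_lt_of_le one_pos hU1
  set d : ℝ := min (B/U) (ε * B^2 / (2 * C^2)) with hd
  have hd0 : 0 < d := by
    apply lt_min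
    · positivity
    · positivity
  refine ⟨d, hd0, ?_⟩
  intro n hn
  by_contra hcon
  push_neg at hcon
  have hsm1 : b (n*τ) < d := lt_of_le_of_lt (le_max_left _ _) hcon
  have hsm2 : b (n*τ + m) < d := lt_of_le_of_lt (le_max_right _ _) hcon
  -- ===== arithmetic construction of two consecutive small positions =====
  set N : ℕ := n * τ with hNdef
  have hN1 : 1 ≤ N := Nat.one_le_iff_ne_zero.2 (Nat.mul_ne_zero (by omega) (by omega))
  set g : ℕ := Nat.gcd N m with hgdef
  have hg1 : 1 ≤ g := Nat.pos_of_ne_zero (fun h => by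
    rw [Nat.gcd_eq_zero_iff] at h; omega)
  set P₁ : ℕ := N / g with hP₁def
  set M₁ : ℕ := m / g with hM₁def
  have hNfact : N = g * P₁ := (Nat.mul_div_cancel' (Nat.gcd_dvd_left N m)).symm
  have hmfact : m = g * M₁ := (Nat.mul_div_cancel' (Nat.gcd_dvd_right N m)).symm
  have hP₁1 : 1 ≤ P₁ := by
    rcases Nat.eq_zero_or_pos P₁ with h | h
    · rw [h, mul_zero] at hNfact; omega
    · omega
  have hM₁1 : 1 ≤ M₁ := by
    rcases Nat.eq_zero_or_pos M₁ with h | h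
    · rw [h, mul_zero] at hmfact; omega
    · omega
  have hgm : g ≤ m := Nat.le_of_dvd (by omega) (Nat.gcd_dvd_right N m)
  have hM₁m : M₁ ≤ m := Nat.le_of_dvd (by omega) ⟨g, by rw [hmfact]; ring⟩
  have hco : Nat.Coprime P₁ M₁ := Nat.coprime_div_gcd_div_gcd (by omega)
  obtain ⟨x, hx1, hx2m, hxdvd⟩ := exists_bounded_inverse P₁ M₁ hM₁1 hco
  have hx2m' : x ≤ 2 * m := le_trans hx2m (by omega)
  set W : ℕ := x * P₁ + 1 with hWdef
  set Z : ℕ := x * (P₁ + M₁) + 1 with hZdef2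
  have hZdvd : M₁ ∣ Z := by
    have hZW : Z = W + x * M₁ := by rw [hWdef, hZdef2]; ring
    rw [hZW]
    exact dvd_add hxdvd (Dvd.intro_left x rfl)
  obtain ⟨w, hw⟩ := hxdvd
  obtain ⟨z, hz⟩ := hZdvd
  have hw1 : 1 ≤ w := by
    rcases Nat.eq_zero_or_pos w with h | h
    · rw [h, mul_zero] at hw; omega
    · omega
  have hz1 : 1 ≤ z := by
    rcases Nat.eq_zero_or_pos z with h | h
    · rw [h, mul_zero] at hz; omega
    · omega
  have hkey : P₁ * z + 1 = (P₁ + M₁) * w := by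
    have hbig : P₁ * Z + M₁ = (P₁ + M₁) * W := by rw [hWdef, hZdef2]; ring
    rw [hz, hw] at hbig
    have h2 : M₁ * (P₁ * z + 1) = M₁ * ((P₁ + M₁) * w) := by
      calc M₁ * (P₁ * z + 1) = P₁ * (M₁ * z) + M₁ := by ring
      _ = (P₁ + M₁) * (M₁ * w) := hbig
      _ = M₁ * ((P₁ + M₁) * w) := by ring
    exact Nat.eq_of_mul_eq_mul_left (by omega) h2
  set R : ℕ := P₁ * z with hRdef
  have hR1 : 1 ≤ R := Nat.one_le_iff_ne_zero.2 (Nat.mul_ne_zero (by omega) (by omega))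
  have hRplus : R + 1 = (P₁ + M₁) * w := hkey
  -- ===== b-value bounds =====
  have hBg : B ≤ b g := (hBU g hg1 (by omega)).1
  have hBM : B ≤ b M₁ := (hBU M₁ hM₁1 (by omega)).1
  have hUx : b x ≤ U := (hBU x hx1 (by omega)).2
  have hbg0 : 0 < b g := hbpos g hg1
  have hbM0 : 0 < b M₁ := hbpos M₁ hM₁1
  have hbP₁0 : 0 < b P₁ := hbpos P₁ hP₁1
  have hbPM0 : 0 < b (P₁ + M₁) := hbpos _ (by omega)
  have hbz0 : 0 < b z := hbpos z hz1
  have hbw0 : 0 < b w := hbpos w hw1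
  have hbN : b N = b g * b P₁ := by rw [hNfact]; exact bmul g P₁ hg1 hP₁1
  have hbP₁d : b P₁ < d / B := by
    rw [lt_div_iff₀ hB0]
    calc b P₁ * B ≤ b P₁ * b g := mul_le_mul_of_nonneg_left hBg (le_of_lt hbP₁0)
    _ = b N := by rw [hbN]; ring
    _ < d := hsm1
  have hNm : N + m = g * (P₁ + M₁) := by rw [hNfact, hmfact]; ring
  have hbNm : b (N + m) = b g * b (P₁ + M₁) := by
    rw [hNm]; exact bmul g (P₁ + M₁) hg1 (by omega)
  have hbPMd : b (P₁ + M₁) < d / B := by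
    rw [lt_div_iff₀ hB0]
    calc b (P₁ + M₁) * B ≤ b (P₁ + M₁) * b g := mul_le_mul_of_nonneg_left hBg (le_of_lt hbPM0)
    _ = b (N + m) := by rw [hbNm]; ring
    _ < d := hsm2
  have hdB0 : 0 < d / B := by positivity
  have hdBU : U * (d / B) ≤ 1 := by
    have hdle : d ≤ B / U := min_le_left _ _
    rw [← mul_div_assoc, div_le_one hB0]
    calc U * d ≤ U * (B / U) := mul_le_mul_of_nonneg_left hdle (le_of_lt hU0)
    _ = B := by field_simp
  have hanchor1 : b (x * (P₁ + M₁)) ≤ 1 := by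
    rw [bmul x (P₁ + M₁) hx1 (by omega)]
    calc b x * b (P₁ + M₁) ≤ U * (d / B) :=
      mul_le_mul hUx (le_of_lt hbPMd) (le_of_lt hbPM0) (le_of_lt hU0)
    _ ≤ 1 := hdBU
  have hanchor2 : b (x * P₁) ≤ 1 := by
    rw [bmul x P₁ hx1 hP₁1]
    calc b x * b P₁ ≤ U * (d / B) :=
      mul_le_mul hUx (le_of_lt hbP₁d) (le_of_lt hbP₁0) (le_of_lt hU0)
    _ ≤ 1 := hdBU
  have hbZC : b Z ≤ C := by
    have h := hPL2 (x * (P₁ + M₁)) 1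
      (Nat.one_le_iff_ne_zero.2 (Nat.mul_ne_zero (by omega) (by omega))) (by omega) hanchor1
    rw [hZdef2]; exact h
  have hbWC : b W ≤ C := by
    have h := hPL2 (x * P₁) 1
      (Nat.one_le_iff_ne_zero.2 (Nat.mul_ne_zero (by omega) (by omega))) (by omega) hanchor2
    rw [hWdef]; exact h
  have hbZeq : b Z = b M₁ * b z := by rw [hz]; exact bmul M₁ z hM₁1 hz1
  have hbWeq : b W = b M₁ * b w := by rw [hw]; exact bmul M₁ w hM₁1 hw1
  have hbzCB : b z ≤ C / B := by
    rw [le_div_iff₀ hB0]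
    calc b z * B ≤ b z * b M₁ := mul_le_mul_of_nonneg_left hBM (le_of_lt hbz0)
    _ = b Z := by rw [hbZeq]; ring
    _ ≤ C := hbZC
  have hbwCB : b w ≤ C / B := by
    rw [le_div_iff₀ hB0]
    calc b w * B ≤ b w * b M₁ := mul_le_mul_of_nonneg_left hBM (le_of_lt hbw0)
    _ = b W := by rw [hbWeq]; ring
    _ ≤ C := hbWC
  have hbReq : b R = b P₁ * b z := by rw [hRdef]; exact bmul P₁ z hP₁1 hz1
  have hbR1eq : b (R + 1) = b (P₁ + M₁) * b w := by
    rw [hRplus]; exact bmul (P₁ + M₁) w (by omega) hw1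
  have hCB0 : (0:ℝ) < C / B := by positivity
  have hbRsmall : b R < d * C / B^2 := by
    rw [hbReq]
    calc b P₁ * b z ≤ b P₁ * (C / B) := mul_le_mul_of_nonneg_left hbzCB (le_of_lt hbP₁0)
    _ < (d / B) * (C / B) := mul_lt_mul_of_pos_right hbP₁d hCB0
    _ = d * C / B^2 := by rw [div_mul_div_comm, pow_two]
  have hbR1small : b (R + 1) < d * C / B^2 := by
    rw [hbR1eq]
    calc b (P₁ + M₁) * b w ≤ b (P₁ + M₁) * (C / B) := mul_le_mul_of_nonneg_left hbwCB (le_of_lt hbPM0)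
    _ < (d / B) * (C / B) := mul_lt_mul_of_pos_right hbPMd hCB0
    _ = d * C / B^2 := by rw [div_mul_div_comm, pow_two]
  have hlevel : d * C / B^2 ≤ ε / (2 * C) := by
    have hdle : d ≤ ε * B^2 / (2 * C^2) := min_le_right _ _
    rw [div_le_div_iff₀ (by positivity) (by positivity)]
    calc d * C * (2 * C) = (2 * C^2) * d := by ring
    _ ≤ (2 * C^2) * (ε * B^2 / (2 * C^2)) := mul_le_mul_of_nonneg_left hdle (by positivity)
    _ = ε * B^2 := by field_simp
  have hεC : ε / (2 * C) < ε / C :=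
    div_lt_div_of_pos_left hε0 hC0 (by linarith)
  have hRεC : b R < ε / C := lt_trans (lt_of_lt_of_le hbRsmall hlevel) hεC
  have hR1εC : b (R + 1) < ε / C := lt_trans (lt_of_lt_of_le hbR1small hlevel) hεC
  have hεCε : ε / C ≤ ε := by
    rw [div_le_iff₀ hC0]
    exact le_mul_of_one_le_right (le_of_lt hε0) hC1
  have hbRε : b R < ε := lt_of_lt_of_le hRεC hεCε
  have hbR1ε : b (R + 1) < ε := lt_of_lt_of_le hR1εC hεCε
  have hbRle1 : b R ≤ 1 := le_of_lt (lt_of_lt_of_le hbRε hε1)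
  -- ===== propagation =====
  have prop : ∀ k : ℕ, k ≤ τ + 1 → b (R + k) = b R := by
    intro k
    induction k using Nat.twoStepInduction with
    | zero => intro _; simp
    | one => intro _; exact hML R hR1 hbRε hbR1ε
    | more k ih1 ih2 =>
      intro hk
      have e1 : b (R + k) = b R := ih1 (by omega)
      have e2 : b (R + (k + 1)) = b R := ih2 (by omega)
      have hsh : b (R + (k + 2)) ≤ C := hPL2 R (k + 2) hR1 (by omega) hbRle1
      have hy1 : (R + k) * (R + (k + 2)) + 1 = (R + (k + 1)) * (R + (k + 1)) := by ring
      have hby : b ((R + k) * (R + (k + 2))) = b R * b (R + (k + 2)) := by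
        rw [bmul (R + k) (R + (k + 2)) (by omega) (by omega), e1]
      have hby1 : b ((R + k) * (R + (k + 2)) + 1) = b R * b R := by
        rw [hy1, bmul (R + (k + 1)) (R + (k + 1)) (by omega) (by omega), e2]
      have hbR0 : 0 < b R := hbpos R hR1
      have hsy : b ((R + k) * (R + (k + 2))) < ε := by
        rw [hby]
        calc b R * b (R + (k + 2)) ≤ b R * C := mul_le_mul_of_nonneg_left hsh (le_of_lt hbR0)
        _ < (ε / C) * C := mul_lt_mul_of_pos_right hRεC hC0
        _ = ε := by field_simp
      have hsy1 : b ((R + k) * (R + (k + 2)) + 1) < ε := by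
        rw [hby1]
        calc b R * b R ≤ b R * 1 := mul_le_mul_of_nonneg_left hbRle1 (le_of_lt hbR0)
        _ = b R := mul_one _
        _ < ε := hbRε
      have hy1le : 1 ≤ (R + k) * (R + (k + 2)) :=
        Nat.one_le_iff_ne_zero.2 (Nat.mul_ne_zero (by omega) (by omega))
      have heq := hML ((R + k) * (R + (k + 2))) hy1le hsy hsy1
      rw [hby1, hby] at heq
      exact (mul_left_cancel₀ (ne_of_gt hbR0) heq).symm
  -- ===== hit a multiple of τ : contradiction with the pair lemma =====
  obtain ⟨k₀, hk₀τ, hk₀mod⟩ := exists_multiple_in_range R τ hτ hR1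
  refine hP0 (R + k₀) (by omega) hk₀mod ⟨?_, ?_⟩
  · rw [prop k₀ (by omega)]; exact hbRε
  · have hidx : R + k₀ + 1 = R + (k₀ + 1) := by omega
    rw [hidx, prop (k₀ + 1) (by omega)]; exact hbRε

end
end
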